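/- arXiv:1308.1815 — 5 statements merged into one kernel-verified Lean document; each statement's English description precedes it below -/
import Mathlib

section
/- Let n ≥ 1, let F be a continuous cumulative distribution function on ℝ, and let d(Y;t) = Σ_{i=0}^n u_i·1{Y_i ≤ t < Y_{i+1}} be an invariant estimator with constants 0 ≤ u_0 ≤ u_1 ≤ … ≤ u_n ≤ 1. Then for every Borel measurable ρ: ℝ → [0,∞] and every continuous strictly increasing τ: [0,1] → ℝ, the risk satisfies E_F[∫_ℝ ρ(τ(d(Y;t)) − τ(F(t))) dF(t)] = Σ_{i=0}^n ∫₀¹ ρ(τ(u_i) − τ(t))·C(n,i)·t^i·(1−t)^{n−i} dt = (1/(n+1))·Σ_{i=0}^n ∫₀¹ ρ(τ(u_i) − τ(t))·f_{T_i}(t) dt (an identity in [0,∞]); in particular, the risk of an invariant estimator does not depend on F. -/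
open MeasureTheory Set Filter
open scoped Topology
open scoped ENNReal NNReal

noncomputable section

/-- Number of sample points `x j ≤ t`, as an element of `Fin (n+1)`.
Note `countLE x t = i` iff `Y_i ≤ t < Y_{i+1}` where `Y_1 ≤ … ≤ Y_n` are the
order statistics of `x` and `Y_0 = -∞`, `Y_{n+1} = +∞`. -/
def countLE {n : ℕ} (x : Fin n → ℝ) (t : ℝ) : Fin (n + 1) :=
  ⟨(Finset.univ.filter (fun j => x j ≤ t)).card,
    Nat.lt_succ_of_le ((Finset.card_filter_le _ _).trans (by simp))⟩

/-- The invariant estimator `d(Y;t) = Σ_{i=0}^n u_i · 1{Y_i ≤ t < Y_{i+1}}`. -/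
def invEst {n : ℕ} (u : Fin (n + 1) → ℝ) : (Fin n → ℝ) → ℝ → ℝ :=
  fun x t => u (countLE x t)

/-- The cumulative distribution function of `μ`. -/
def cdfOf (μ : Measure ℝ) (t : ℝ) : ℝ := (μ (Set.Iic t)).toReal

/-- Distribution of an i.i.d. sample of size `n` from `μ`. -/
def sampleMeasure (n : ℕ) (μ : Measure ℝ) : Measure (Fin n → ℝ) :=
  Measure.pi fun _ => μ

/-- `(n+1)·C(n,i)·t^i·(1−t)^{n−i}`, the `Beta(i+1, n−i+1)` density on `(0,1)`. -/
def betaDen (n i : ℕ) (t : ℝ) : ℝ :=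
  ((n : ℝ) + 1) * (n.choose i) * t ^ i * (1 - t) ^ (n - i)


/-- The risk `E_F[∫ ρ(τ(d(Y;t)) − τ(F(t))) dF(t)]` with values in `[0,∞]`. -/
def riskE {n : ℕ} (μ : Measure ℝ) (ρ : ℝ → ℝ≥0∞) (τ : ℝ → ℝ)
    (d : (Fin n → ℝ) → ℝ → ℝ) : ℝ≥0∞ :=
  ∫⁻ x, (∫⁻ t, ρ (τ (d x t) - τ (cdfOf μ t)) ∂μ) ∂(sampleMeasure n μ)

lemma measurable_countLE {n : ℕ} :
    Measurable (fun p : (Fin n → ℝ) × ℝ => countLE p.1 p.2) := by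
  have hm : Measurable (fun p : (Fin n → ℝ) × ℝ =>
      (∑ j : Fin n, if p.1 j ≤ p.2 then 1 else 0 : ℕ)) := by
    apply Finset.measurable_sum
    intro j _
    have hset : MeasurableSet {p : (Fin n → ℝ) × ℝ | p.1 j ≤ p.2} :=
      measurableSet_le (measurable_fst.eval) measurable_snd
    exact Measurable.ite hset measurable_const measurable_const
  apply measurable_to_countable'
  intro i
  have : (fun p : (Fin n → ℝ) × ℝ => countLE p.1 p.2) ⁻¹' {i}
      = {p | (∑ j : Fin n, if p.1 j ≤ p.2 then 1 else 0 : ℕ) = i.val} := by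
    ext p
    simp only [Set.mem_preimage, Set.mem_singleton_iff, Set.mem_setOf_eq, countLE, Fin.ext_iff,
      ← Finset.card_filter]
  rw [this]
  exact hm (measurableSet_singleton i.val)

lemma measurableSet_countLE_fix {n : ℕ} (t : ℝ) (i : Fin (n + 1)) :
    MeasurableSet {x : Fin n → ℝ | countLE x t = i} := by
  have : {x : Fin n → ℝ | countLE x t = i}
      = (fun x : Fin n → ℝ => (x, t)) ⁻¹' ((fun p : (Fin n → ℝ) × ℝ => countLE p.1 p.2) ⁻¹' {i}) := by
    ext x; simp
  rw [this]
  exact (measurable_countLE (measurableSet_singleton i)).preimage (measurable_id.prodMk measurable_const)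

lemma filter_eq_of_mem_pi {n : ℕ} {x : Fin n → ℝ} {t : ℝ} {s : Finset (Fin n)}
    (hx : x ∈ Set.pi Set.univ (fun j => if j ∈ s then Iic t else Ioi t)) :
    Finset.univ.filter (fun j => x j ≤ t) = s := by
  ext j
  have h := hx j (Set.mem_univ j)
  by_cases hj : j ∈ s
  · simp only [hj, if_true, Set.mem_Iic] at h
    simp [hj, h]
  · simp only [hj, if_false, Set.mem_Ioi] at h
    simp [hj, not_le.mpr h]

lemma measure_countLE {n : ℕ} (μ : Measure ℝ) [IsProbabilityMeasure μ] (t : ℝ) (i : Fin (n + 1)) :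
    sampleMeasure n μ {x | countLE x t = i} =
      (n.choose i) * μ (Iic t) ^ (i : ℕ) * μ (Ioi t) ^ (n - (i : ℕ)) := by
  classical
  have key : {x : Fin n → ℝ | countLE x t = i} =
      ⋃ s ∈ Finset.univ.powersetCard (i : ℕ),
        Set.pi Set.univ (fun j => if j ∈ s then Iic t else Ioi t) := by
    ext x
    simp only [Set.mem_setOf_eq, Set.mem_iUnion, Finset.mem_powersetCard, exists_prop]
    constructor
    · intro h
      refine ⟨Finset.univ.filter (fun j => x j ≤ t), ⟨Finset.subset_univ _, ?_⟩, ?_⟩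
      · simpa [countLE, Fin.ext_iff] using h
      · intro j _
        by_cases hj : x j ≤ t
        · simp [hj]
        · simp [hj, not_le.mp hj]
    · rintro ⟨s, ⟨-, hcard⟩, hx⟩
      have := filter_eq_of_mem_pi hx
      simp [countLE, Fin.ext_iff, this, hcard]
  rw [key]
  rw [measure_biUnion_finset ?hd ?hm]
  case hd =>
    intro s hs s' hs' hss
    apply Set.disjoint_left.mpr
    intro x hx hx'
    exact hss ((filter_eq_of_mem_pi hx).symm.trans (filter_eq_of_mem_pi hx'))
  case hm =>
    intro s _
    apply MeasurableSet.univ_pi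
    intro j
    by_cases hj : j ∈ s <;> simp [hj, measurableSet_Iic, measurableSet_Ioi]
  have hval : ∀ s ∈ Finset.univ.powersetCard (i : ℕ),
      sampleMeasure n μ (Set.pi Set.univ (fun j => if j ∈ s then Iic t else Ioi t))
        = μ (Iic t) ^ (i : ℕ) * μ (Ioi t) ^ (n - (i : ℕ)) := by
    intro s hs
    rw [Finset.mem_powersetCard] at hs
    rw [sampleMeasure, Measure.pi_pi]
    have : ∀ j : Fin n, μ (if j ∈ s then Iic t else Ioi t)
        = if j ∈ s then μ (Iic t) else μ (Ioi t) := fun j => apply_ite μ _ _ _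
    simp_rw [this]
    rw [Finset.prod_ite, Finset.prod_const, Finset.prod_const]
    congr 1
    · congr 1
      rw [← hs.2]; congr 1
      ext j; simp
    · congr 1
      rw [← hs.2]
      have : Finset.univ.filter (fun j => ¬ j ∈ s) = sᶜ := by ext j; simp
      rw [this, Finset.card_compl, Fintype.card_fin]
  rw [Finset.sum_congr rfl hval, Finset.sum_const, Finset.card_powersetCard,
    Finset.card_univ, Fintype.card_fin, nsmul_eq_mul, mul_assoc]

lemma cdfOf_eq_cdf (μ : Measure ℝ) [IsProbabilityMeasure μ] :
    cdfOf μ = ProbabilityTheory.cdf μ := by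
  ext t; rw [cdfOf, ProbabilityTheory.cdf_eq_real, measureReal_def]

lemma map_cdfOf (μ : Measure ℝ) [IsProbabilityMeasure μ] (hF : Continuous (cdfOf μ)) :
    Measure.map (cdfOf μ) μ = volume.restrict (Set.Icc (0 : ℝ) 1) := by
  have hmono : Monotone (cdfOf μ) := by
    rw [cdfOf_eq_cdf]; exact ProbabilityTheory.monotone_cdf μ
  have h0 : ∀ t, 0 ≤ cdfOf μ t := by
    rw [cdfOf_eq_cdf]; exact ProbabilityTheory.cdf_nonneg μ
  have h1 : ∀ t, cdfOf μ t ≤ 1 := by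
    rw [cdfOf_eq_cdf]; exact ProbabilityTheory.cdf_le_one μ
  have hbot : Tendsto (cdfOf μ) atBot (𝓝 0) := by
    rw [cdfOf_eq_cdf]; exact ProbabilityTheory.tendsto_cdf_atBot μ
  have htop : Tendsto (cdfOf μ) atTop (𝓝 1) := by
    rw [cdfOf_eq_cdf]; exact ProbabilityTheory.tendsto_cdf_atTop μ
  refine Measure.ext_of_Iic _ _ (fun a => ?_)
  rw [Measure.map_apply hF.measurable measurableSet_Iic, Measure.restrict_apply measurableSet_Iic]
  rcases lt_or_ge a 0 with ha | ha
  · have h₁ : cdfOf μ ⁻¹' Iic a = ∅ := by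
      ext t; simp only [Set.mem_preimage, Set.mem_Iic, Set.mem_empty_iff_false, iff_false, not_le]
      exact lt_of_lt_of_le ha (h0 t)
    have h₂ : Iic a ∩ Icc (0 : ℝ) 1 = ∅ := by
      ext s; simp only [Set.mem_inter_iff, Set.mem_Iic, Set.mem_Icc, Set.mem_empty_iff_false,
        iff_false]
      rintro ⟨hs, hs0, -⟩; linarith
    rw [h₁, h₂]; simp
  rcases le_or_gt 1 a with ha1 | ha1
  · have h₁ : cdfOf μ ⁻¹' Iic a = Set.univ := by
      ext t; simp only [Set.mem_preimage, Set.mem_Iic, Set.mem_univ, iff_true]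
      exact (h1 t).trans ha1
    have h₂ : Iic a ∩ Icc (0 : ℝ) 1 = Icc 0 1 := by
      apply Set.inter_eq_self_of_subset_right
      intro s hs; exact hs.2.trans ha1
    rw [h₁, h₂]
    simp [Real.volume_Icc]
  -- main case 0 ≤ a < 1
  have h₂ : Iic a ∩ Icc (0 : ℝ) 1 = Icc 0 a := by
    ext s
    simp only [Set.mem_inter_iff, Set.mem_Iic, Set.mem_Icc]
    constructor
    · rintro ⟨hs, hs0, -⟩; exact ⟨hs0, hs⟩
    · rintro ⟨hs0, hs⟩; exact ⟨hs, hs0, hs.trans ha1.le⟩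
  rw [h₂, Real.volume_Icc]
  set S : Set ℝ := cdfOf μ ⁻¹' Iic a with hS
  have hSclosed : IsClosed S := IsClosed.preimage hF isClosed_Iic
  -- there is t₀ with a < cdfOf μ t₀
  obtain ⟨t₀, ht₀⟩ : ∃ t₀, a < cdfOf μ t₀ := by
    have := htop.eventually (eventually_gt_nhds ha1)
    rcases this.exists with ⟨t₀, ht₀⟩
    exact ⟨t₀, ht₀⟩
  have hbdd : BddAbove S := by
    refine ⟨t₀, fun t ht => ?_⟩
    by_contra h
    push_neg at h
    exact absurd (le_trans (hmono h.le) ht) (not_le.mpr ht₀)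
  rcases Set.eq_empty_or_nonempty S with hSe | hSne
  · -- S empty ⇒ a ≤ 0, so a = 0
    have ha0 : a ≤ 0 := by
      by_contra h
      push_neg at h
      have := hbot.eventually (eventually_lt_nhds h)
      rcases this.exists with ⟨t, ht⟩
      exact absurd (hSe ▸ (show t ∈ S from le_of_lt ht)) (Set.notMem_empty t)
    have : a = 0 := le_antisymm ha0 ha
    rw [hSe, this]
    simp
  · set c := sSup S with hc
    have hcS : c ∈ S := hSclosed.csSup_mem hSne hbdd
    have hSeq : S = Iic c := by
      apply Set.Subset.antisymm
      · intro t ht; exact le_csSup hbdd ht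
      · intro t ht
        exact le_trans (hmono ht) hcS
    have hca : cdfOf μ c ≤ a := hcS
    have hac : a ≤ cdfOf μ c := by
      by_contra h
      push_neg at h
      have hopen : IsOpen {t | cdfOf μ t < a} := isOpen_lt hF continuous_const
      rcases Metric.isOpen_iff.mp hopen c h with ⟨ε, hε, hball⟩
      have hmem : c + ε / 2 ∈ S := by
        have hmemball : c + ε / 2 ∈ Metric.ball c ε := by
          rw [Metric.mem_ball, Real.dist_eq]
          have he : c + ε / 2 - c = ε / 2 := by ring
          rw [he, abs_of_pos (by linarith)]
          linarith
        have h' : cdfOf μ (c + ε / 2) < a := hball hmemball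
        exact h'.le
      have := le_csSup hbdd hmem
      linarith
    have hfc : cdfOf μ c = a := le_antisymm hca hac
    rw [hSeq]
    rw [← ENNReal.ofReal_toReal (measure_ne_top μ (Iic c))]
    rw [show (μ (Iic c)).toReal = cdfOf μ c from rfl, hfc, sub_zero]

lemma lintegral_cdfOf (μ : Measure ℝ) [IsProbabilityMeasure μ] (hF : Continuous (cdfOf μ))
    {f : ℝ → ℝ≥0∞} (hf : Measurable f) :
    ∫⁻ t, f (cdfOf μ t) ∂μ = ∫⁻ s in Set.Ioo (0 : ℝ) 1, f s := by
  rw [← lintegral_map hf hF.measurable, map_cdfOf μ hF, ← MeasureTheory.restrict_Ioo_eq_restrict_Icc]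


/-- the risk of an invariant estimator under the integrated loss
`L_{ρ,τ}` equals `Σ_{i=0}^n ∫₀¹ ρ(τ(u_i) − τ(t))·C(n,i)·t^i·(1−t)^{n−i} dt`
and also `(1/(n+1))·Σ_{i=0}^n ∫₀¹ ρ(τ(u_i) − τ(t))·f_{T_i}(t) dt`; in particular
it does not depend on `F`. -/
theorem invariant_risk_decomposition
    {n : ℕ} (hn : 1 ≤ n)
    (μ : Measure ℝ) [IsProbabilityMeasure μ] (hF : Continuous (cdfOf μ))
    (ρ : ℝ → ℝ≥0∞) (hρ : Measurable ρ)
    (τ : ℝ → ℝ) (hτc : ContinuousOn τ (Set.Icc 0 1))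
    (hτm : StrictMonoOn τ (Set.Icc 0 1))
    (u : Fin (n + 1) → ℝ) (hu : Monotone u) (hu0 : 0 ≤ u 0)
    (hu1 : u (Fin.last n) ≤ 1) :
    riskE μ ρ τ (invEst u) =
        ∑ i : Fin (n + 1), ∫⁻ t in Set.Ioo (0 : ℝ) 1,
          ρ (τ (u i) - τ t) *
            ENNReal.ofReal ((n.choose i) * t ^ (i : ℕ) * (1 - t) ^ (n - (i : ℕ))) ∧
      riskE μ ρ τ (invEst u) =
        (1 / ((n : ℝ≥0∞) + 1)) * ∑ i : Fin (n + 1), ∫⁻ t in Set.Ioo (0 : ℝ) 1,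
          ρ (τ (u i) - τ t) * ENNReal.ofReal (betaDen n i t) := by
  classical
  haveI : IsProbabilityMeasure (sampleMeasure n μ) := by
    unfold sampleMeasure; infer_instance
  have hui : ∀ i : Fin (n + 1), u i ∈ Set.Icc (0 : ℝ) 1 := fun i =>
    ⟨le_trans hu0 (hu (Fin.zero_le i)), le_trans (hu (Fin.le_last i)) hu1⟩
  have hF0 : ∀ t, 0 ≤ cdfOf μ t := fun t => ENNReal.toReal_nonneg
  have hF1 : ∀ t, cdfOf μ t ≤ 1 := by
    intro t
    have h := prob_le_one (μ := μ) (s := Set.Iic t)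
    calc cdfOf μ t ≤ (1 : ℝ≥0∞).toReal := ENNReal.toReal_mono ENNReal.one_ne_top h
    _ = 1 := by simp
  have hFmem : ∀ t, cdfOf μ t ∈ Set.Icc (0 : ℝ) 1 := fun t => ⟨hF0 t, hF1 t⟩
  -- truncation of τ
  set proj : ℝ → ℝ := fun s => max 0 (min 1 s) with hproj
  have hprojmem : ∀ s, proj s ∈ Set.Icc (0 : ℝ) 1 :=
    fun s => ⟨le_max_left _ _, max_le zero_le_one (min_le_left _ _)⟩
  have hprojc : Continuous proj := continuous_const.max (continuous_const.min continuous_id)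
  have hprojeq : ∀ s ∈ Set.Icc (0 : ℝ) 1, proj s = s := by
    intro s hs
    simp only [hproj]
    rw [min_eq_right hs.2, max_eq_right hs.1]
  set τ' : ℝ → ℝ := fun s => τ (proj s) with hτ'def
  have hτ'c : Continuous τ' := hτc.comp_continuous hprojc hprojmem
  have hτ'eq : ∀ s ∈ Set.Icc (0 : ℝ) 1, τ' s = τ s := fun s hs => by
    simp only [hτ'def]; rw [hprojeq s hs]
  -- integrand families
  set G : Fin (n + 1) → ℝ → ℝ≥0∞ := fun i s => ρ (τ' (u i) - τ' s) with hG
  have hGmeas : ∀ i, Measurable (G i) :=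
    fun i => hρ.comp (measurable_const.sub hτ'c.measurable)
  set c : Fin (n + 1) → ℝ → ℝ := fun i s =>
    (n.choose (i : ℕ) : ℝ) * s ^ (i : ℕ) * (1 - s) ^ (n - (i : ℕ)) with hc
  have hpoly : ∀ i : Fin (n + 1), Measurable (fun s : ℝ => ENNReal.ofReal (c i s)) := by
    intro i
    apply ENNReal.measurable_ofReal.comp
    fun_prop
  set H : ℝ → ℝ≥0∞ := fun s => ∑ i : Fin (n + 1), G i s * ENNReal.ofReal (c i s) with hH
  have hHmeas : Measurable H := Finset.measurable_sum _ (fun i _ => (hGmeas i).mul (hpoly i))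
  -- Step 1: replace τ by τ'
  have step1 : riskE μ ρ τ (invEst u) =
      ∫⁻ x, ∫⁻ t, ρ (τ' (u (countLE x t)) - τ' (cdfOf μ t)) ∂μ ∂(sampleMeasure n μ) := by
    unfold riskE invEst
    apply lintegral_congr; intro x
    apply lintegral_congr; intro t
    rw [hτ'eq _ (hui _), hτ'eq _ (hFmem t)]
  -- Step 2: Tonelli
  have hΦ : Measurable (fun p : (Fin n → ℝ) × ℝ =>
      ρ (τ' (u (countLE p.1 p.2)) - τ' (cdfOf μ p.2))) := by
    apply hρ.comp
    apply Measurable.sub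
    · exact (measurable_from_top (f := fun i : Fin (n + 1) => τ' (u i))).comp measurable_countLE
    · exact (hτ'c.comp (hF.comp continuous_snd)).measurable
  have step2 : riskE μ ρ τ (invEst u) =
      ∫⁻ t, ∫⁻ x, ρ (τ' (u (countLE x t)) - τ' (cdfOf μ t)) ∂(sampleMeasure n μ) ∂μ := by
    rw [step1]
    exact lintegral_lintegral_swap hΦ.aemeasurable
  -- Step 3: inner integral is H (cdfOf μ t)
  have hinner : ∀ t : ℝ, ∫⁻ x, ρ (τ' (u (countLE x t)) - τ' (cdfOf μ t)) ∂(sampleMeasure n μ)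
      = H (cdfOf μ t) := by
    intro t
    have hptw : ∀ x : Fin n → ℝ, ρ (τ' (u (countLE x t)) - τ' (cdfOf μ t))
        = ∑ i : Fin (n + 1),
            Set.indicator {x | countLE x t = i} (fun _ => G i (cdfOf μ t)) x := by
      intro x
      rw [Finset.sum_eq_single (countLE x t)]
      · simp [Set.indicator_apply, hG]
      · intro i _ hi
        simp [Set.indicator_apply, Ne.symm hi]
      · simp
    rw [lintegral_congr hptw, lintegral_finset_sum _
      (fun i _ => measurable_const.indicator (measurableSet_countLE_fix t i))]
    have hIic : μ (Set.Iic t) = ENNReal.ofReal (cdfOf μ t) :=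
      (ENNReal.ofReal_toReal (measure_ne_top μ _)).symm
    have hIoi : μ (Set.Ioi t) = ENNReal.ofReal (1 - cdfOf μ t) := by
      have hcompl : Set.Ioi t = (Set.Iic t)ᶜ := Set.compl_Iic.symm
      rw [hcompl, measure_compl measurableSet_Iic (measure_ne_top μ _), measure_univ, hIic,
        ENNReal.ofReal_sub 1 (hF0 t), ENNReal.ofReal_one]
    apply Finset.sum_congr rfl
    intro i _
    rw [lintegral_indicator_const (measurableSet_countLE_fix t i), measure_countLE μ t i]
    congr 1
    rw [hc]
    rw [ENNReal.ofReal_mul (mul_nonneg (Nat.cast_nonneg _) (pow_nonneg (hF0 t) _)),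
      ENNReal.ofReal_mul (Nat.cast_nonneg _),
      ENNReal.ofReal_pow (hF0 t), ENNReal.ofReal_pow (by linarith [hF1 t]),
      ENNReal.ofReal_natCast, hIic, hIoi]
  -- Step 4-5: change of variables and sum
  have main1' : riskE μ ρ τ (invEst u)
      = ∑ i : Fin (n + 1), ∫⁻ s in Set.Ioo (0 : ℝ) 1, G i s * ENNReal.ofReal (c i s) := by
    rw [step2, lintegral_congr hinner, lintegral_cdfOf μ hF hHmeas]
    exact lintegral_finset_sum _ (fun i _ => (hGmeas i).mul (hpoly i))
  -- replace τ' back by τ on Ioo 0 1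
  have hswap : ∀ (i : Fin (n + 1)) (g : ℝ → ℝ),
      (∫⁻ s in Set.Ioo (0 : ℝ) 1, G i s * ENNReal.ofReal (g s))
      = ∫⁻ s in Set.Ioo (0 : ℝ) 1, ρ (τ (u i) - τ s) * ENNReal.ofReal (g s) := by
    intro i g
    apply setLIntegral_congr_fun measurableSet_Ioo
    intro s hs
    rw [hG]
    simp only
    rw [hτ'eq _ (hui i), hτ'eq s ⟨hs.1.le, hs.2.le⟩]
  have main1 : riskE μ ρ τ (invEst u) =
      ∑ i : Fin (n + 1), ∫⁻ t in Set.Ioo (0 : ℝ) 1,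
        ρ (τ (u i) - τ t) *
          ENNReal.ofReal ((n.choose (i : ℕ) : ℝ) * t ^ (i : ℕ) * (1 - t) ^ (n - (i : ℕ))) := by
    rw [main1']
    exact Finset.sum_congr rfl (fun i _ => hswap i (c i))
  refine ⟨main1, ?_⟩
  -- second identity
  set N : ℝ≥0∞ := (n : ℝ≥0∞) + 1 with hNdef
  have hN0 : N ≠ 0 := by simp [hNdef]
  have hNtop : N ≠ ⊤ := by
    simp [hNdef]
  have hbeta : ∀ (i : Fin (n + 1)) (t : ℝ),
      ENNReal.ofReal (betaDen n i t) = N * ENNReal.ofReal (c i t) := by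
    intro i t
    have h1 : betaDen n i t = ((n : ℝ) + 1) * c i t := by
      rw [hc]; unfold betaDen; ring
    rw [h1, ENNReal.ofReal_mul (by positivity)]
    congr 1
    rw [ENNReal.ofReal_add (by positivity) zero_le_one, ENNReal.ofReal_natCast,
      ENNReal.ofReal_one]
  have hpull : ∀ i : Fin (n + 1),
      (∫⁻ t in Set.Ioo (0 : ℝ) 1, G i t * ENNReal.ofReal (betaDen n i t))
      = N * ∫⁻ t in Set.Ioo (0 : ℝ) 1, G i t * ENNReal.ofReal (c i t) := by
    intro i
    rw [← lintegral_const_mul N (f := fun t => G i t * ENNReal.ofReal (c i t)) ((hGmeas i).mul (hpoly i))]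
    apply lintegral_congr
    intro t
    rw [hbeta i t, mul_left_comm]
  calc riskE μ ρ τ (invEst u)
      = ∑ i : Fin (n + 1), ∫⁻ s in Set.Ioo (0 : ℝ) 1, G i s * ENNReal.ofReal (c i s) := main1'
    _ = (1 / N) * (N * ∑ i : Fin (n + 1), ∫⁻ s in Set.Ioo (0 : ℝ) 1,
          G i s * ENNReal.ofReal (c i s)) := by
        rw [← mul_assoc, one_div, ENNReal.inv_mul_cancel hN0 hNtop, one_mul]
    _ = (1 / N) * ∑ i : Fin (n + 1), ∫⁻ t in Set.Ioo (0 : ℝ) 1,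
          ρ (τ (u i) - τ t) * ENNReal.ofReal (betaDen n i t) := by
        rw [Finset.mul_sum]
        congr 1
        apply Finset.sum_congr rfl
        intro i _
        rw [← hpull i, hswap i (betaDen n i)]

end
end

section
/- Let n ≥ 1, let ρ: ℝ → [0,∞) be strict bowl-shaped and differentiable, and let τ: [0,1] → ℝ be continuous and strictly increasing. For 0 ≤ i ≤ n define G_i(u) = ∫₀¹ ρ(τ(u) − τ(t))·f_{T_i}(t) dt, and assume G_i is finite on [0,1] and attains its minimum on [0,1] at some point u_i* for every i. Then for every continuous cumulative distribution function F and every invariant estimator d(Y;t) = Σ_{i=0}^n u_i·1{Y_i ≤ t < Y_{i+1}} with 0 ≤ u_0 ≤ … ≤ u_n ≤ 1, one has E_F[∫_ℝ ρ(τ(d(Y;t)) − τ(F(t))) dF(t)] ≥ (1/(n+1))·Σ_{i=0}^n G_i(u_i*), and the estimator d*(Y;t) = Σ_{i=0}^n u_i*·1{Y_i ≤ t < Y_{i+1}} attains this bound for every continuous F (i.e., its risk is constant in F and equal to (1/(n+1))·Σ_{i=0}^n G_i(u_i*)). -/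
open MeasureTheory Set
open scoped ENNReal NNReal

noncomputable section

/-- `ρ : ℝ → ℝ` is strict bowl-shaped and differentiable: differentiable,
`ρ(0) = 0`, `ρ′(z) < 0` for `z < 0` and `ρ′(z) > 0` for `z > 0`. -/
structure StrictBowlShaped (ρ : ℝ → ℝ) : Prop where
  nonneg : ∀ z, 0 ≤ ρ z
  diff : Differentiable ℝ ρ
  zero : ρ 0 = 0
  deriv_neg : ∀ z < (0 : ℝ), deriv ρ z < 0
  deriv_pos : ∀ z > (0 : ℝ), 0 < deriv ρ z

/-- The risk `E_F[∫ ρ(τ(d(Y;t)) − τ(F(t))) dF(t)]` (in `[0,∞]`) for real-valued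
nonnegative `ρ`. -/
def riskOf {n : ℕ} (μ : Measure ℝ) (ρ τ : ℝ → ℝ)
    (d : (Fin n → ℝ) → ℝ → ℝ) : ℝ≥0∞ :=
  ∫⁻ x, (∫⁻ t, ENNReal.ofReal (ρ (τ (d x t) - τ (cdfOf μ t))) ∂μ)
    ∂(sampleMeasure n μ)

/-- `G_i(v) = ∫₀¹ ρ(τ(v) − τ(t))·f_{T_i}(t) dt`. -/
def GFun (n : ℕ) (ρ τ : ℝ → ℝ) (i : Fin (n + 1)) (v : ℝ) : ℝ :=
  ∫ t in Set.Ioo (0 : ℝ) 1, ρ (τ v - τ t) * betaDen n i t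

namespace BestInv


variable {n : ℕ}

lemma cdfOf_nonneg (μ : Measure ℝ) (t : ℝ) : 0 ≤ cdfOf μ t := ENNReal.toReal_nonneg

lemma cdfOf_le_one (μ : Measure ℝ) [IsProbabilityMeasure μ] (t : ℝ) : cdfOf μ t ≤ 1 := by
  have h : μ (Set.Iic t) ≤ 1 := prob_le_one
  calc (μ (Set.Iic t)).toReal ≤ (1 : ℝ≥0∞).toReal :=
        ENNReal.toReal_mono ENNReal.one_ne_top h
    _ = 1 := by simp

lemma cdfOf_mem_Icc (μ : Measure ℝ) [IsProbabilityMeasure μ] (t : ℝ) :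
    cdfOf μ t ∈ Set.Icc (0 : ℝ) 1 := ⟨cdfOf_nonneg μ t, cdfOf_le_one μ t⟩

lemma ofReal_cdfOf (μ : Measure ℝ) [IsProbabilityMeasure μ] (t : ℝ) :
    ENNReal.ofReal (cdfOf μ t) = μ (Set.Iic t) :=
  ENNReal.ofReal_toReal (measure_ne_top _ _)

lemma cdfOf_mono (μ : Measure ℝ) [IsProbabilityMeasure μ] : Monotone (cdfOf μ) :=
  fun _ _ h => ENNReal.toReal_mono (measure_ne_top _ _) (measure_mono (Set.Iic_subset_Iic.2 h))

lemma measure_Ioi_eq (μ : Measure ℝ) [IsProbabilityMeasure μ] (t : ℝ) :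
    μ (Set.Ioi t) = ENNReal.ofReal (1 - cdfOf μ t) := by
  have h := measure_compl (μ := μ) (s := Set.Iic t) measurableSet_Iic (measure_ne_top μ _)
  rw [Set.compl_Iic] at h
  rw [h, measure_univ, ← ofReal_cdfOf μ t, ← ENNReal.ofReal_one,
    ← ENNReal.ofReal_sub _ (cdfOf_nonneg μ t)]

lemma countLE_eq_iff (x : Fin n → ℝ) (t : ℝ) (i : Fin (n + 1)) :
    countLE x t = i ↔ (Finset.univ.filter (fun j => x j ≤ t)).card = (i : ℕ) := by
  simp [countLE, Fin.ext_iff]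

lemma measurable_countLE_prod :
    Measurable (fun p : (Fin n → ℝ) × ℝ => countLE p.1 p.2) := by
  apply measurable_to_countable'
  intro i
  have hN : Measurable (fun p : (Fin n → ℝ) × ℝ =>
      (Finset.univ.filter (fun j => p.1 j ≤ p.2)).card) := by
    simp_rw [Finset.card_filter]
    exact Finset.measurable_sum _ fun j _ =>
      Measurable.ite
        (measurableSet_le (measurable_fst.eval) measurable_snd)
        measurable_const measurable_const
  have hpre : (fun p : (Fin n → ℝ) × ℝ => countLE p.1 p.2) ⁻¹' {i}
      = (fun p : (Fin n → ℝ) × ℝ =>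
          (Finset.univ.filter (fun j => p.1 j ≤ p.2)).card) ⁻¹' {(i : ℕ)} := by
    ext p
    simp [Set.mem_preimage, countLE_eq_iff]
  rw [hpre]
  exact hN (measurableSet_singleton _)

lemma measurable_countLE (t : ℝ) : Measurable (fun x : Fin n → ℝ => countLE x t) :=
  measurable_countLE_prod.comp (measurable_id.prodMk measurable_const)

lemma measurableSet_countLE (t : ℝ) (i : Fin (n + 1)) :
    MeasurableSet {x : Fin n → ℝ | countLE x t = i} :=
  measurable_countLE t (measurableSet_singleton i)


variable {n : ℕ}

lemma mem_pi_iff (t : ℝ) (s : Finset (Fin n)) (x : Fin n → ℝ)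
    (hx : x ∈ Set.pi Set.univ (fun j => if j ∈ s then Set.Iic t else Set.Ioi t)) :
    ∀ j, j ∈ s ↔ x j ≤ t := by
  intro j
  have h := hx j (Set.mem_univ j)
  by_cases hj : j ∈ s
  · simp only [hj, if_true, Set.mem_Iic] at h
    exact ⟨fun _ => h, fun _ => hj⟩
  · simp only [hj, if_false, Set.mem_Ioi] at h
    exact ⟨fun hc => absurd hc hj, fun hc => absurd hc (not_le.2 h)⟩

lemma fiber_eq (t : ℝ) (i : Fin (n + 1)) :
    {x : Fin n → ℝ | countLE x t = i} =
      ⋃ s ∈ Finset.powersetCard (i : ℕ) (Finset.univ : Finset (Fin n)),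
        Set.pi Set.univ (fun j => if j ∈ s then Set.Iic t else Set.Ioi t) := by
  ext x
  simp only [Set.mem_setOf_eq, countLE_eq_iff, Set.mem_iUnion, Finset.mem_powersetCard,
    exists_prop]
  constructor
  · intro h
    refine ⟨Finset.univ.filter (fun j => x j ≤ t), ⟨Finset.subset_univ _, h⟩, ?_⟩
    intro j _
    by_cases hj : x j ≤ t
    · simp [hj]
    · simp only [Finset.mem_filter, Finset.mem_univ, true_and, hj, if_false, Set.mem_Ioi]
      exact not_le.1 hj
  · rintro ⟨s, ⟨-, hcard⟩, hs⟩
    have hfe : Finset.univ.filter (fun j => x j ≤ t) = s := by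
      ext j
      simp only [Finset.mem_filter, Finset.mem_univ, true_and]
      exact (mem_pi_iff t s x hs j).symm
    rw [hfe, hcard]

lemma measure_pi_set (μ : Measure ℝ) [IsProbabilityMeasure μ] (t : ℝ) (s : Finset (Fin n)) :
    sampleMeasure n μ (Set.pi Set.univ (fun j => if j ∈ s then Set.Iic t else Set.Ioi t))
      = μ (Set.Iic t) ^ s.card * μ (Set.Ioi t) ^ (n - s.card) := by
  rw [sampleMeasure, Measure.pi_pi]
  have h1 : ∀ j : Fin n, μ (if j ∈ s then Set.Iic t else Set.Ioi t)
      = if j ∈ s then μ (Set.Iic t) else μ (Set.Ioi t) := fun j => apply_ite μ _ _ _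
  simp_rw [h1]
  rw [Finset.prod_ite, Finset.prod_const, Finset.prod_const]
  have h2 : Finset.univ.filter (fun j => j ∈ s) = s := by ext j; simp
  have h3 : Finset.univ.filter (fun j => ¬ j ∈ s) = sᶜ := by ext j; simp
  rw [h2, h3, Finset.card_compl, Fintype.card_fin]

lemma measure_countLE (μ : Measure ℝ) [IsProbabilityMeasure μ] (t : ℝ) (i : Fin (n + 1)) :
    sampleMeasure n μ {x | countLE x t = i}
      = (n.choose (i : ℕ)) * (μ (Set.Iic t) ^ (i : ℕ) * μ (Set.Ioi t) ^ (n - (i : ℕ))) := by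
  rw [fiber_eq]
  have hmeas : ∀ s ∈ Finset.powersetCard (i : ℕ) (Finset.univ : Finset (Fin n)),
      MeasurableSet (Set.pi Set.univ (fun j : Fin n => if j ∈ s then Set.Iic t else Set.Ioi t)) := by
    intro s _
    exact MeasurableSet.univ_pi fun j => by
      split <;> [exact measurableSet_Iic; exact measurableSet_Ioi]
  have hdisj : Set.PairwiseDisjoint
      (↑(Finset.powersetCard (i : ℕ) (Finset.univ : Finset (Fin n))))
      (fun s : Finset (Fin n) =>
        Set.pi Set.univ (fun j => if j ∈ s then Set.Iic t else Set.Ioi t)) := by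
    intro s _ s' _ hne
    refine Set.disjoint_left.2 fun x hx hx' => hne ?_
    ext j
    exact (mem_pi_iff t s x hx j).trans (mem_pi_iff t s' x hx' j).symm
  rw [measure_biUnion_finset hdisj hmeas]
  have hsum : ∀ s ∈ Finset.powersetCard (i : ℕ) (Finset.univ : Finset (Fin n)),
      sampleMeasure n μ (Set.pi Set.univ (fun j : Fin n => if j ∈ s then Set.Iic t else Set.Ioi t))
        = μ (Set.Iic t) ^ (i : ℕ) * μ (Set.Ioi t) ^ (n - (i : ℕ)) := by
    intro s hs
    rw [measure_pi_set μ t s, (Finset.mem_powersetCard.1 hs).2]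
  rw [Finset.sum_congr rfl hsum, Finset.sum_const, Finset.card_powersetCard, Finset.card_univ,
    Fintype.card_fin, nsmul_eq_mul]







lemma tendsto_cdfOf_atTop (μ : Measure ℝ) [IsProbabilityMeasure μ] :
    Filter.Tendsto (cdfOf μ) Filter.atTop (nhds 1) := by
  have h := tendsto_measure_Iic_atTop (μ := μ)
  rw [measure_univ] at h
  have := (ENNReal.tendsto_toReal ENNReal.one_ne_top).comp h
  simp only [Function.comp_def, ENNReal.toReal_one, ENNReal.toReal_zero] at this
  exact this

lemma tendsto_cdfOf_atBot (μ : Measure ℝ) [IsProbabilityMeasure μ] :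
    Filter.Tendsto (cdfOf μ) Filter.atBot (nhds 0) := by
  have hiInter : ⋂ t : ℝ, Set.Iic t = (∅ : Set ℝ) := by
    ext x
    simp only [Set.mem_iInter, Set.mem_Iic, Set.mem_empty_iff_false, iff_false, not_forall]
    exact ⟨x - 1, by push_neg; linarith⟩
  have h := tendsto_measure_iInter_atBot (μ := μ)
      (fun t : ℝ => measurableSet_Iic.nullMeasurableSet) (fun a b hab => Set.Iic_subset_Iic.2 hab)
      ⟨0, measure_ne_top μ _⟩
  rw [hiInter, measure_empty] at h
  have := (ENNReal.tendsto_toReal (by simp : (0:ℝ≥0∞) ≠ ⊤)).comp h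
  simp only [Function.comp_def, ENNReal.toReal_one, ENNReal.toReal_zero] at this
  exact this

lemma map_cdfOf (μ : Measure ℝ) [IsProbabilityMeasure μ] (hc : Continuous (cdfOf μ)) :
    μ.map (cdfOf μ) = volume.restrict (Set.Icc (0 : ℝ) 1) := by
  have hm : Measurable (cdfOf μ) := hc.measurable
  haveI : IsProbabilityMeasure (μ.map (cdfOf μ)) :=
    Measure.isProbabilityMeasure_map hm.aemeasurable
  refine Measure.ext_of_Iic _ _ (fun a => ?_)
  rw [Measure.map_apply hm measurableSet_Iic, Measure.restrict_apply measurableSet_Iic]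
  rcases lt_or_ge a 0 with ha | ha
  · have h1 : cdfOf μ ⁻¹' Set.Iic a = ∅ := by
      ext t; simp only [Set.mem_preimage, Set.mem_Iic, Set.mem_empty_iff_false, iff_false, not_le]
      exact lt_of_lt_of_le ha (cdfOf_nonneg μ t)
    have h2 : Set.Iic a ∩ Set.Icc (0:ℝ) 1 = ∅ := by
      ext v; simp only [Set.mem_inter_iff, Set.mem_Iic, Set.mem_Icc, Set.mem_empty_iff_false,
        iff_false, not_and]
      intro hv h0 h1v; linarith
    rw [h1, h2]; simp
  rcases le_or_gt 1 a with ha1 | ha1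
  · have h1 : cdfOf μ ⁻¹' Set.Iic a = Set.univ := by
      ext t; simp only [Set.mem_preimage, Set.mem_Iic, Set.mem_univ, iff_true]
      exact le_trans (cdfOf_le_one μ t) ha1
    have h2 : Set.Iic a ∩ Set.Icc (0:ℝ) 1 = Set.Icc 0 1 := by
      rw [Set.inter_eq_self_of_subset_right]
      intro v hv; exact le_trans hv.2 ha1
    rw [h1, h2, measure_univ, Real.volume_Icc]
    norm_num
  · -- 0 ≤ a < 1
    have h2 : Set.Iic a ∩ Set.Icc (0:ℝ) 1 = Set.Icc 0 a := by
      ext v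
      simp only [Set.mem_inter_iff, Set.mem_Iic, Set.mem_Icc]
      constructor
      · rintro ⟨h1, h2, h3⟩; exact ⟨h2, h1⟩
      · rintro ⟨h1, h2⟩; exact ⟨h2, h1, le_trans h2 ha1.le⟩
    rw [h2, Real.volume_Icc, sub_zero]
    set S := cdfOf μ ⁻¹' Set.Iic a with hS
    by_cases hne : S.Nonempty
    · by_cases hbdd : BddAbove S
      · have hclosed : IsClosed S := IsClosed.preimage hc isClosed_Iic
        have hsmem : sSup S ∈ S := hclosed.csSup_mem hne hbdd
        have hSeq : S = Set.Iic (sSup S) := by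
          ext t
          constructor
          · intro ht; exact le_csSup hbdd ht
          · intro ht
            exact le_trans (cdfOf_mono μ ht) hsmem
        have hsle : cdfOf μ (sSup S) ≤ a := hsmem
        have hFs : cdfOf μ (sSup S) = a := by
          rcases lt_or_eq_of_le hsle with hlt | heq
          · exfalso
            obtain ⟨M, hM⟩ : ∃ M, a < cdfOf μ M := by
              have := tendsto_cdfOf_atTop μ
              have hev : ∀ᶠ t in Filter.atTop, a < cdfOf μ t :=
                this.eventually (eventually_gt_nhds ha1)
              exact hev.exists
            have hsM : sSup S ≤ M := by
              by_contra hMs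
              push_neg at hMs
              exact absurd (le_trans (cdfOf_mono μ hMs.le) hsmem) (not_le.2 hM)
            obtain ⟨t, ht, hta⟩ := intermediate_value_Icc hsM hc.continuousOn
              (⟨hlt.le, hM.le⟩ : a ∈ Set.Icc (cdfOf μ (sSup S)) (cdfOf μ M))
            have htS : t ∈ S := by simp only [hS, Set.mem_preimage, Set.mem_Iic, hta, le_refl]
            have hts : t ≤ sSup S := le_csSup hbdd htS
            have : cdfOf μ t ≤ cdfOf μ (sSup S) := cdfOf_mono μ hts
            rw [hta] at this
            exact absurd this (not_le.2 hlt)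
          · exact heq
        rw [hSeq, ← ofReal_cdfOf μ (sSup S), hFs]
      · exfalso
        have hall : ∀ t : ℝ, cdfOf μ t ≤ a := by
          intro t
          rw [not_bddAbove_iff] at hbdd
          obtain ⟨t', ht'S, htt'⟩ := hbdd t
          exact le_trans (cdfOf_mono μ htt'.le) ht'S
        have := le_of_tendsto (tendsto_cdfOf_atTop μ) (Filter.Eventually.of_forall hall)
        linarith
    · rw [Set.not_nonempty_iff_eq_empty] at hne
      rw [hne, measure_empty]
      have hall : ∀ t : ℝ, a ≤ cdfOf μ t := by
        intro t
        by_contra h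
        push_neg at h
        exact absurd (show t ∈ S from h.le) (by simp [hne])
      have h0 : a ≤ 0 :=
        ge_of_tendsto (tendsto_cdfOf_atBot μ) (Filter.Eventually.of_forall hall)
      have : a = 0 := le_antisymm h0 ha
      rw [this, ENNReal.ofReal_zero]


variable {n : ℕ}










lemma betaDen_nonneg {n i : ℕ} {v : ℝ} (hv0 : 0 ≤ v) (hv1 : v ≤ 1) :
    0 ≤ betaDen n i v := by
  rw [betaDen]
  have h1 : (0:ℝ) ≤ 1 - v := by linarith
  have h2 : (0:ℝ) ≤ (n : ℝ) + 1 := by positivity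
  exact mul_nonneg (mul_nonneg (mul_nonneg h2 (Nat.cast_nonneg _)) (pow_nonneg hv0 _))
    (pow_nonneg h1 _)

lemma measure_countLE_ofReal (μ : Measure ℝ) [IsProbabilityMeasure μ] (t : ℝ) (i : Fin (n + 1)) :
    sampleMeasure n μ {x | countLE x t = i}
      = ENNReal.ofReal ((n.choose (i : ℕ)) * (cdfOf μ t) ^ (i : ℕ)
          * (1 - cdfOf μ t) ^ (n - (i : ℕ))) := by
  rw [measure_countLE μ t i, ← ofReal_cdfOf μ t, measure_Ioi_eq μ t,
    ← ENNReal.ofReal_pow (cdfOf_nonneg μ t), ← ENNReal.ofReal_pow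
      (by linarith [cdfOf_le_one μ t] : (0:ℝ) ≤ 1 - cdfOf μ t),
    ← ENNReal.ofReal_mul (pow_nonneg (cdfOf_nonneg μ t) _), ← ENNReal.ofReal_natCast,
    ← ENNReal.ofReal_mul (Nat.cast_nonneg _), mul_assoc]

lemma lintegral_comp_countLE (μ : Measure ℝ) [IsProbabilityMeasure μ] (t : ℝ)
    (g : Fin (n + 1) → ℝ≥0∞) :
    ∫⁻ x, g (countLE x t) ∂(sampleMeasure n μ)
      = ∑ i : Fin (n + 1), g i * sampleMeasure n μ {x | countLE x t = i} := by
  have hpt : ∀ x : Fin n → ℝ, g (countLE x t)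
      = ∑ i : Fin (n + 1), Set.indicator {x | countLE x t = i} (fun _ => g i) x := by
    intro x
    rw [Finset.sum_eq_single (countLE x t)]
    · exact (Set.indicator_of_mem (show x ∈ {y | countLE y t = countLE x t} from rfl)
        (fun _ => g (countLE x t))).symm
    · intro b _ hb
      exact Set.indicator_of_notMem (fun h => hb (Eq.symm h)) _
    · exact fun h => absurd (Finset.mem_univ _) h
  simp_rw [hpt]
  rw [lintegral_finset_sum _ (fun i _ => measurable_const.indicator (measurableSet_countLE t i))]
  exact Finset.sum_congr rfl fun i _ => by
    rw [lintegral_indicator (measurableSet_countLE t i), setLIntegral_const]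

lemma master (μ : Measure ℝ) [IsProbabilityMeasure μ] (hc : Continuous (cdfOf μ))
    (ρ τ : ℝ → ℝ) (hρ0 : ∀ z, 0 ≤ ρ z) (hρc : Continuous ρ) (hτ : Continuous τ)
    (u : Fin (n + 1) → ℝ) (hu : ∀ i, u i ∈ Set.Icc (0 : ℝ) 1)
    (hint : ∀ i : Fin (n + 1),
      IntegrableOn (fun t => ρ (τ (u i) - τ t) * betaDen n (i : ℕ) t) (Set.Ioo 0 1) volume) :
    riskOf μ ρ τ (invEst u)
      = ENNReal.ofReal ((1 / ((n : ℝ) + 1)) * ∑ i : Fin (n + 1), GFun n ρ τ i (u i)) := by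
  haveI : IsProbabilityMeasure (sampleMeasure n μ) := by
    rw [sampleMeasure]; infer_instance
  have hFm : Measurable (cdfOf μ) := hc.measurable
  -- joint measurability
  have hjm : AEMeasurable
      (Function.uncurry fun (x : Fin n → ℝ) (t : ℝ) =>
        ENNReal.ofReal (ρ (τ (invEst u x t) - τ (cdfOf μ t))))
      ((sampleMeasure n μ).prod μ) := by
    apply Measurable.aemeasurable
    have h1 : Measurable fun p : (Fin n → ℝ) × ℝ => τ (u (countLE p.1 p.2)) :=
      (measurable_from_top (f := fun i : Fin (n+1) => τ (u i))).comp measurable_countLE_prod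
    have h2 : Measurable fun p : (Fin n → ℝ) × ℝ => τ (cdfOf μ p.2) :=
      ((hτ.comp hc).comp continuous_snd).measurable
    exact ENNReal.measurable_ofReal.comp (hρc.measurable.comp (h1.sub h2))
  rw [riskOf]
  have hswap : ∫⁻ x, (∫⁻ t, ENNReal.ofReal (ρ (τ (invEst u x t) - τ (cdfOf μ t))) ∂μ)
        ∂(sampleMeasure n μ)
      = ∫⁻ t, (∫⁻ x, ENNReal.ofReal (ρ (τ (invEst u x t) - τ (cdfOf μ t)))
          ∂(sampleMeasure n μ)) ∂μ :=
    lintegral_lintegral_swap hjm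
  rw [hswap]
  -- inner integral
  have hinner : ∀ t : ℝ,
      (∫⁻ x, ENNReal.ofReal (ρ (τ (invEst u x t) - τ (cdfOf μ t))) ∂(sampleMeasure n μ))
        = ∑ i : Fin (n + 1), ENNReal.ofReal
            (ρ (τ (u i) - τ (cdfOf μ t)) *
              ((n.choose (i : ℕ)) * (cdfOf μ t) ^ (i : ℕ) * (1 - cdfOf μ t) ^ (n - (i : ℕ)))) := by
    intro t
    have hstep := lintegral_comp_countLE μ t
      (fun i : Fin (n + 1) => ENNReal.ofReal (ρ (τ (u i) - τ (cdfOf μ t))))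
    refine (hstep.trans ?_)
    refine Finset.sum_congr rfl fun i _ => ?_
    rw [measure_countLE_ofReal μ t i, ← ENNReal.ofReal_mul (hρ0 _)]
  simp_rw [hinner]
  -- swap sum and integral over t
  rw [lintegral_finset_sum]
  swap
  · intro i _
    apply ENNReal.measurable_ofReal.comp
    apply Measurable.mul
    · exact (hρc.comp ((continuous_const.sub (hτ.comp hc)))).measurable
    · exact ((continuous_const.mul (hc.pow _)).mul ((continuous_const.sub hc).pow _)).measurable
  -- per-i computation
  have hper : ∀ i : Fin (n + 1),
      ∫⁻ t, ENNReal.ofReal (ρ (τ (u i) - τ (cdfOf μ t)) *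
          ((n.choose (i : ℕ)) * (cdfOf μ t) ^ (i : ℕ) * (1 - cdfOf μ t) ^ (n - (i : ℕ)))) ∂μ
        = ENNReal.ofReal (1 / ((n : ℝ) + 1)) * ENNReal.ofReal (GFun n ρ τ i (u i)) := by
    intro i
    have hg : Measurable fun v : ℝ => ENNReal.ofReal (ρ (τ (u i) - τ v) *
        ((n.choose (i : ℕ)) * v ^ (i : ℕ) * (1 - v) ^ (n - (i : ℕ)))) := by
      apply ENNReal.measurable_ofReal.comp
      apply Measurable.mul
      · exact (hρc.comp (continuous_const.sub hτ)).measurable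
      · exact ((continuous_const.mul (continuous_id.pow _)).mul
          ((continuous_const.sub continuous_id).pow _)).measurable
    have hmap : ∫⁻ t, ENNReal.ofReal (ρ (τ (u i) - τ (cdfOf μ t)) *
          ((n.choose (i : ℕ)) * (cdfOf μ t) ^ (i : ℕ) * (1 - cdfOf μ t) ^ (n - (i : ℕ)))) ∂μ
        = ∫⁻ v, ENNReal.ofReal (ρ (τ (u i) - τ v) *
            ((n.choose (i : ℕ)) * v ^ (i : ℕ) * (1 - v) ^ (n - (i : ℕ))))
          ∂(μ.map (cdfOf μ)) := (lintegral_map hg hFm).symm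
    rw [hmap, map_cdfOf μ hc, ← restrict_Ioo_eq_restrict_Icc]
    have harith : ∀ v : ℝ, ρ (τ (u i) - τ v) *
        ((n.choose (i : ℕ)) * v ^ (i : ℕ) * (1 - v) ^ (n - (i : ℕ)))
        = (1 / ((n : ℝ) + 1)) * (ρ (τ (u i) - τ v) * betaDen n (i : ℕ) v) := by
      intro v
      rw [betaDen]
      have hne : ((n : ℝ) + 1) ≠ 0 := by positivity
      field_simp
    simp_rw [harith]
    simp_rw [ENNReal.ofReal_mul (by positivity : (0:ℝ) ≤ 1 / ((n : ℝ) + 1))]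
    rw [lintegral_const_mul' _ _ ENNReal.ofReal_ne_top]
    congr 1
    rw [← ofReal_integral_eq_lintegral_ofReal (hint i)]
    · rfl
    · filter_upwards [ae_restrict_mem measurableSet_Ioo] with v hv
      exact mul_nonneg (hρ0 _) (betaDen_nonneg hv.1.le hv.2.le)
  simp_rw [hper]
  rw [← Finset.mul_sum, ← ENNReal.ofReal_sum_of_nonneg, ← ENNReal.ofReal_mul
    (by positivity : (0:ℝ) ≤ 1 / ((n : ℝ) + 1))]
  intro i _
  apply setIntegral_nonneg measurableSet_Ioo
  intro v hv
  exact mul_nonneg (hρ0 _) (betaDen_nonneg hv.1.le hv.2.le)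


end BestInv

/-- the best invariant estimator, with weights `u_i*` minimizing
`G_i` over `[0,1]`, has constant risk `(1/(n+1))·Σ_i G_i(u_i*)`, which is a
lower bound for the risk of any invariant estimator. -/
theorem best_invariant_estimator
    {n : ℕ} (hn : 1 ≤ n)
    (ρ : ℝ → ℝ) (hρ : StrictBowlShaped ρ)
    (τ : ℝ → ℝ) (hτc : ContinuousOn τ (Set.Icc 0 1))
    (hτm : StrictMonoOn τ (Set.Icc 0 1))
    (hGfin : ∀ (i : Fin (n + 1)), ∀ v ∈ Set.Icc (0 : ℝ) 1,
      IntegrableOn (fun t => ρ (τ v - τ t) * betaDen n i t) (Set.Ioo 0 1) volume)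
    (ustar : Fin (n + 1) → ℝ)
    (hustar : ∀ i : Fin (n + 1), ustar i ∈ Set.Icc (0 : ℝ) 1 ∧
      ∀ v ∈ Set.Icc (0 : ℝ) 1, GFun n ρ τ i (ustar i) ≤ GFun n ρ τ i v) :
    ∀ (μ : Measure ℝ), IsProbabilityMeasure μ → Continuous (cdfOf μ) →
      (∀ (u : Fin (n + 1) → ℝ), Monotone u → 0 ≤ u 0 → u (Fin.last n) ≤ 1 →
        ENNReal.ofReal ((1 / ((n : ℝ) + 1)) * ∑ i : Fin (n + 1), GFun n ρ τ i (ustar i)) ≤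
          riskOf μ ρ τ (invEst u)) ∧
      riskOf μ ρ τ (invEst ustar) =
        ENNReal.ofReal ((1 / ((n : ℝ) + 1)) * ∑ i : Fin (n + 1), GFun n ρ τ i (ustar i)) := by
  intro μ hμ hc
  haveI := hμ
  have hρ0 := hρ.nonneg
  have hρc : Continuous ρ := hρ.diff.continuous
  set π : ℝ → ℝ := fun v => max 0 (min v 1) with hπ
  have hπmem : ∀ v, π v ∈ Set.Icc (0:ℝ) 1 := fun v =>
    ⟨le_max_left _ _, max_le (by norm_num) (min_le_right _ _)⟩
  have hπeq : ∀ v ∈ Set.Icc (0:ℝ) 1, π v = v := by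
    intro v hv
    simp only [hπ]
    rw [min_eq_left hv.2, max_eq_right hv.1]
  set τ' : ℝ → ℝ := fun v => τ (π v) with hτ'def
  have hτ'c : Continuous τ' :=
    hτc.comp_continuous (continuous_const.max (continuous_id.min continuous_const)) hπmem
  have hτ'eq : ∀ v ∈ Set.Icc (0:ℝ) 1, τ' v = τ v := by
    intro v hv
    simp only [hτ'def]
    rw [hπeq v hv]
  have hG : ∀ (i : Fin (n+1)), ∀ v ∈ Set.Icc (0:ℝ) 1, GFun n ρ τ' i v = GFun n ρ τ i v := by
    intro i v hv
    unfold GFun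
    apply setIntegral_congr_fun measurableSet_Ioo
    intro t ht
    show ρ (τ' v - τ' t) * betaDen n (i : ℕ) t = ρ (τ v - τ t) * betaDen n (i : ℕ) t
    rw [hτ'eq v hv, hτ'eq t ⟨ht.1.le, ht.2.le⟩]
  have hint' : ∀ (u : Fin (n+1) → ℝ), (∀ i, u i ∈ Set.Icc (0:ℝ) 1) → ∀ i : Fin (n+1),
      IntegrableOn (fun t => ρ (τ' (u i) - τ' t) * betaDen n (i : ℕ) t) (Set.Ioo 0 1) volume := by
    intro u hu i
    refine (hGfin i (u i) (hu i)).congr_fun ?_ measurableSet_Ioo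
    intro t ht
    simp only
    rw [hτ'eq (u i) (hu i), hτ'eq t ⟨ht.1.le, ht.2.le⟩]
  have hrisk : ∀ u : Fin (n+1) → ℝ, (∀ i, u i ∈ Set.Icc (0:ℝ) 1) →
      riskOf μ ρ τ (invEst u) = riskOf μ ρ τ' (invEst u) := by
    intro u hu
    unfold riskOf
    refine lintegral_congr fun x => lintegral_congr fun t => ?_
    rw [hτ'eq (invEst u x t) (hu (countLE x t)), hτ'eq (cdfOf μ t) (BestInv.cdfOf_mem_Icc μ t)]
  have hmaster : ∀ u : Fin (n+1) → ℝ, (∀ i, u i ∈ Set.Icc (0:ℝ) 1) →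
      riskOf μ ρ τ (invEst u)
        = ENNReal.ofReal ((1 / ((n : ℝ) + 1)) * ∑ i : Fin (n + 1), GFun n ρ τ i (u i)) := by
    intro u hu
    rw [hrisk u hu, BestInv.master μ hc ρ τ' hρ0 hρc hτ'c u hu (hint' u hu)]
    congr 2
    exact Finset.sum_congr rfl fun i _ => hG i (u i) (hu i)
  have humem : ∀ i : Fin (n+1), ustar i ∈ Set.Icc (0:ℝ) 1 := fun i => (hustar i).1
  constructor
  · intro u hm hu0 hu1
    have humem' : ∀ i : Fin (n+1), u i ∈ Set.Icc (0:ℝ) 1 := fun i =>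
      ⟨le_trans hu0 (hm (Fin.zero_le i)), le_trans (hm (Fin.le_last i)) hu1⟩
    rw [hmaster u humem']
    apply ENNReal.ofReal_le_ofReal
    apply mul_le_mul_of_nonneg_left _ (by positivity : (0:ℝ) ≤ 1 / ((n : ℝ) + 1))
    exact Finset.sum_le_sum fun i _ => (hustar i).2 (u i) (humem' i)
  · exact hmaster ustar humem

end
end

section
/- Let n ≥ 1, let ρ: ℝ → [0,∞) be strict bowl-shaped and differentiable with sup_z |ρ′(z)| < ∞, and let τ: [0,1] → ℝ be continuous and strictly increasing. Define G_0(u) = ∫₀¹ ρ(τ(u) − τ(t))·(n+1)·(1−t)^n dt and G_n(u) = ∫₀¹ ρ(τ(u) − τ(t))·(n+1)·t^n dt for u ∈ [0,1]. Then every minimizer u_0* of G_0 on [0,1] satisfies u_0* > 0, and every minimizer u_n* of G_n on [0,1] satisfies u_n* < 1. -/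
open MeasureTheory Set Filter
open scoped ENNReal NNReal Topology

noncomputable section

private lemma flip_integral (f g : ℝ → ℝ) (hfg : ∀ t, f t = g (1 - t)) :
    (∫ t in Set.Ioo (0:ℝ) 1, f t) = ∫ t in Set.Ioo (0:ℝ) 1, g t := by
  have hf : f = fun t => g (1 - t) := funext hfg
  rw [hf,
    show (∫ t in Set.Ioo (0:ℝ) 1, g (1-t)) = ∫ t in (0:ℝ)..1, g (1-t) from by
      rw [intervalIntegral.integral_of_le (by norm_num : (0:ℝ) ≤ 1),
        MeasureTheory.integral_Ioc_eq_integral_Ioo],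
    show (∫ t in Set.Ioo (0:ℝ) 1, g t) = ∫ t in (0:ℝ)..1, g t from by
      rw [intervalIntegral.integral_of_le (by norm_num : (0:ℝ) ≤ 1),
        MeasureTheory.integral_Ioc_eq_integral_Ioo]]
  simpa using intervalIntegral.integral_comp_sub_left g 1

lemma core_lemma
    (ρ : ℝ → ℝ) (hρ : StrictBowlShaped ρ)
    (K : ℝ) (hK : ∀ z, |deriv ρ z| ≤ K)
    (τ : ℝ → ℝ) (hτc : ContinuousOn τ (Set.Icc 0 1))
    (hτm : StrictMonoOn τ (Set.Icc 0 1))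
    (w : ℝ → ℝ) (hw_cont : ContinuousOn w (Set.Icc 0 1))
    (M : ℝ) (hw0 : ∀ t ∈ Set.Icc (0:ℝ) 1, 0 ≤ w t) (hwM : ∀ t ∈ Set.Icc (0:ℝ) 1, w t ≤ M)
    (m : ℝ) (hm : 0 < m) (hwm : ∀ t ∈ Set.Icc (1/2:ℝ) (3/4), m ≤ w t)
    (hmin : ∀ v ∈ Set.Icc (0:ℝ) 1,
      (∫ t in Set.Ioo (0:ℝ) 1, ρ (τ 0 - τ t) * w t) ≤
        ∫ t in Set.Ioo (0:ℝ) 1, ρ (τ v - τ t) * w t) :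
    False := by
  have hK0 : 0 ≤ K := le_trans (abs_nonneg _) (hK 0)
  -- ρ is K-Lipschitz
  have lip : ∀ a b : ℝ, |ρ a - ρ b| ≤ K * |a - b| := by
    intro a b
    have := Convex.norm_image_sub_le_of_norm_deriv_le (s := (univ : Set ℝ))
      (fun x _ => hρ.diff x) (fun x _ => by simpa using hK x) convex_univ
      (mem_univ b) (mem_univ a)
    simpa [Real.norm_eq_abs] using this
  -- ρ is antitone on nonpositives
  have anti : ∀ a b : ℝ, a ≤ b → b ≤ 0 → ρ b ≤ ρ a := by
    have hs : StrictAntiOn ρ (Iic 0) :=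
      strictAntiOn_of_deriv_neg (convex_Iic 0) hρ.diff.continuous.continuousOn
        (fun x hx => hρ.deriv_neg x (by simpa [interior_Iic] using hx))
    intro a b hab hb0
    rcases eq_or_lt_of_le hab with rfl | h
    · exact le_rfl
    · exact (hs (show a ∈ Iic 0 from le_trans hab hb0) (show b ∈ Iic 0 from hb0) h).le
  have mem0 : (0:ℝ) ∈ Icc (0:ℝ) 1 := by norm_num
  -- the sequence u k
  set u : ℕ → ℝ := fun k => ((k:ℝ) + 2)⁻¹ with hu_def
  have hu_pos : ∀ k, 0 < u k := by
    intro k; have : (0:ℝ) < (k:ℝ) + 2 := by positivity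
    exact inv_pos.2 this
  have hu_half : ∀ k, u k ≤ 1/2 := by
    intro k
    rw [hu_def]
    rw [show (1:ℝ)/2 = (2:ℝ)⁻¹ by norm_num]
    apply inv_anti₀ (by norm_num)
    have : (0:ℝ) ≤ (k:ℝ) := Nat.cast_nonneg k
    linarith
  have hu_mem : ∀ k, u k ∈ Icc (0:ℝ) 1 := fun k =>
    ⟨(hu_pos k).le, le_trans (hu_half k) (by norm_num)⟩
  have hu_tendsto : Tendsto u atTop (𝓝 0) := by
    have h1 : Tendsto (fun k : ℕ => (k:ℝ) + 2) atTop atTop :=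
      tendsto_atTop_add_const_right _ 2 tendsto_natCast_atTop_atTop
    exact h1.inv_tendsto_atTop
  set h : ℕ → ℝ := fun k => τ (u k) - τ 0 with hh_def
  have hh_pos : ∀ k, 0 < h k := by
    intro k
    have := hτm mem0 (hu_mem k) (hu_pos k)
    simpa [hh_def] using sub_pos.2 this
  have hh_tendsto : Tendsto h atTop (𝓝 0) := by
    have hτ0 : Tendsto (fun k => τ (u k)) atTop (𝓝 (τ 0)) := by
      have hcw : ContinuousWithinAt τ (Icc 0 1) 0 := hτc 0 mem0
      exact hcw.tendsto.comp (tendsto_nhdsWithin_iff.2 ⟨hu_tendsto,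
        Eventually.of_forall hu_mem⟩)
    simpa using hτ0.sub_const (τ 0)

  -- continuity / integrability facts
  have contρτ : ∀ v : ℝ, ContinuousOn (fun t => ρ (τ v - τ t)) (Icc (0:ℝ) 1) := fun v =>
    hρ.diff.continuous.comp_continuousOn (continuousOn_const.sub hτc)
  have contF : ∀ v : ℝ, ContinuousOn (fun t => ρ (τ v - τ t) * w t) (Icc (0:ℝ) 1) :=
    fun v => (contρτ v).mul hw_cont
  have intF : ∀ v : ℝ, IntegrableOn (fun t => ρ (τ v - τ t) * w t) (Ioo (0:ℝ) 1) := fun v =>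
    ((contF v).integrableOn_Icc).mono_set Ioo_subset_Icc_self
  have iiD : ∀ (k : ℕ) (a b : ℝ), 0 ≤ a → a ≤ b → b ≤ 1 →
      IntervalIntegrable (fun t => ρ (τ (u k) - τ t) * w t - ρ (τ 0 - τ t) * w t)
        volume a b := by
    intro k a b h0a hab hb1
    apply ContinuousOn.intervalIntegrable
    apply ((contF (u k)).sub (contF 0)).mono
    rw [uIcc_of_le hab]
    exact Icc_subset_Icc h0a hb1
  -- the key inequality
  have key : ∀ k, m * (∫ t in (1/2:ℝ)..(3/4), (ρ (τ 0 - τ t) - ρ (τ (u k) - τ t)))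
      ≤ K * M * u k * h k := by
    intro k
    have huk0 : 0 < u k := hu_pos k
    have hukh : u k ≤ 1/2 := hu_half k
    have huk1 : u k ≤ 1 := (hu_mem k).2
    have hDle : ∀ t ∈ Icc (u k) (1:ℝ),
        ρ (τ (u k) - τ t) - ρ (τ 0 - τ t) ≤ 0 := by
      intro t ht
      have ht01 : t ∈ Icc (0:ℝ) 1 := ⟨le_trans huk0.le ht.1, ht.2⟩
      have h1 : τ (u k) ≤ τ t := by
        rcases eq_or_lt_of_le ht.1 with heq | hlt
        · rw [heq]
        · exact (hτm (hu_mem k) ht01 hlt).le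
      have h2 : τ 0 ≤ τ (u k) := (hτm mem0 (hu_mem k) huk0).le
      have := anti (τ 0 - τ t) (τ (u k) - τ t) (by linarith) (by linarith)
      linarith
    have step0 : 0 ≤ ∫ t in (0:ℝ)..1,
        (ρ (τ (u k) - τ t) * w t - ρ (τ 0 - τ t) * w t) := by
      have e : (∫ t in (0:ℝ)..1, (ρ (τ (u k) - τ t) * w t - ρ (τ 0 - τ t) * w t))
          = (∫ t in Ioo (0:ℝ) 1, ρ (τ (u k) - τ t) * w t)
            - ∫ t in Ioo (0:ℝ) 1, ρ (τ 0 - τ t) * w t := by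
        rw [intervalIntegral.integral_of_le (by norm_num : (0:ℝ) ≤ 1),
          integral_Ioc_eq_integral_Ioo, ← integral_sub (intF (u k)) (intF 0)]
      rw [e]
      have := hmin (u k) (hu_mem k)
      linarith
    have s1 : (∫ t in (0:ℝ)..(u k), (ρ (τ (u k) - τ t) * w t - ρ (τ 0 - τ t) * w t))
        + (∫ t in (u k)..(1:ℝ), (ρ (τ (u k) - τ t) * w t - ρ (τ 0 - τ t) * w t))
        = ∫ t in (0:ℝ)..1, (ρ (τ (u k) - τ t) * w t - ρ (τ 0 - τ t) * w t) :=
      intervalIntegral.integral_add_adjacent_intervals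
        (iiD k 0 (u k) le_rfl huk0.le huk1) (iiD k (u k) 1 huk0.le huk1 le_rfl)
    have s2 : (∫ t in (u k)..(1/2:ℝ), (ρ (τ (u k) - τ t) * w t - ρ (τ 0 - τ t) * w t))
        + (∫ t in (1/2:ℝ)..(1:ℝ), (ρ (τ (u k) - τ t) * w t - ρ (τ 0 - τ t) * w t))
        = ∫ t in (u k)..(1:ℝ), (ρ (τ (u k) - τ t) * w t - ρ (τ 0 - τ t) * w t) :=
      intervalIntegral.integral_add_adjacent_intervals
        (iiD k (u k) (1/2) huk0.le hukh (by norm_num))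
        (iiD k (1/2) 1 (by norm_num) (by norm_num) le_rfl)
    have s3 : (∫ t in (1/2:ℝ)..(3/4:ℝ), (ρ (τ (u k) - τ t) * w t - ρ (τ 0 - τ t) * w t))
        + (∫ t in (3/4:ℝ)..(1:ℝ), (ρ (τ (u k) - τ t) * w t - ρ (τ 0 - τ t) * w t))
        = ∫ t in (1/2:ℝ)..(1:ℝ), (ρ (τ (u k) - τ t) * w t - ρ (τ 0 - τ t) * w t) :=
      intervalIntegral.integral_add_adjacent_intervals
        (iiD k (1/2) (3/4) (by norm_num) (by norm_num) (by norm_num))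
        (iiD k (3/4) 1 (by norm_num) (by norm_num) le_rfl)
    have b1 : (∫ t in (0:ℝ)..(u k), (ρ (τ (u k) - τ t) * w t - ρ (τ 0 - τ t) * w t))
        ≤ u k * (K * h k * M) := by
      have hb : ∀ t ∈ Icc (0:ℝ) (u k),
          ρ (τ (u k) - τ t) * w t - ρ (τ 0 - τ t) * w t ≤ K * h k * M := by
        intro t ht
        have ht01 : t ∈ Icc (0:ℝ) 1 := ⟨ht.1, le_trans ht.2 huk1⟩
        have h1 : ρ (τ (u k) - τ t) - ρ (τ 0 - τ t) ≤ K * h k := by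
          refine le_trans (le_abs_self _) (le_trans (lip _ _) ?_)
          have e2 : (τ (u k) - τ t) - (τ 0 - τ t) = h k := by
            simp only [hh_def]; ring
          rw [e2, abs_of_pos (hh_pos k)]
        have hKh : 0 ≤ K * h k := mul_nonneg hK0 (hh_pos k).le
        have := mul_le_mul h1 (hwM t ht01) (hw0 t ht01) hKh
        nlinarith [this]
      have hmono := intervalIntegral.integral_mono_on huk0.le
        (iiD k 0 (u k) le_rfl huk0.le huk1)
        (intervalIntegrable_const (c := K * h k * M)) hb
      rw [intervalIntegral.integral_const] at hmono
      refine hmono.trans (le_of_eq ?_)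
      rw [sub_zero, smul_eq_mul]
    have b2 : (∫ t in (u k)..(1/2:ℝ), (ρ (τ (u k) - τ t) * w t - ρ (τ 0 - τ t) * w t))
        ≤ 0 := by
      have h0 : 0 ≤ ∫ t in (u k)..(1/2:ℝ),
          (-(ρ (τ (u k) - τ t) * w t - ρ (τ 0 - τ t) * w t)) := by
        apply intervalIntegral.integral_nonneg hukh
        intro t ht
        have ht' : t ∈ Icc (u k) (1:ℝ) := ⟨ht.1, le_trans ht.2 (by norm_num)⟩
        have ht01 : t ∈ Icc (0:ℝ) 1 :=
          ⟨le_trans huk0.le ht.1, le_trans ht.2 (by norm_num)⟩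
        have hmul : (ρ (τ (u k) - τ t) - ρ (τ 0 - τ t)) * w t ≤ 0 :=
          mul_nonpos_iff.2 (Or.inr ⟨hDle t ht', hw0 t ht01⟩)
        nlinarith [hmul]
      rw [intervalIntegral.integral_neg] at h0
      linarith
    have b4 : (∫ t in (3/4:ℝ)..(1:ℝ), (ρ (τ (u k) - τ t) * w t - ρ (τ 0 - τ t) * w t))
        ≤ 0 := by
      have h0 : 0 ≤ ∫ t in (3/4:ℝ)..(1:ℝ),
          (-(ρ (τ (u k) - τ t) * w t - ρ (τ 0 - τ t) * w t)) := by
        apply intervalIntegral.integral_nonneg (by norm_num)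
        intro t ht
        have ht' : t ∈ Icc (u k) (1:ℝ) := ⟨le_trans (le_trans hukh (by norm_num)) ht.1, ht.2⟩
        have ht01 : t ∈ Icc (0:ℝ) 1 := ⟨le_trans (by norm_num) ht.1, ht.2⟩
        have hmul : (ρ (τ (u k) - τ t) - ρ (τ 0 - τ t)) * w t ≤ 0 :=
          mul_nonpos_iff.2 (Or.inr ⟨hDle t ht', hw0 t ht01⟩)
        nlinarith [hmul]
      rw [intervalIntegral.integral_neg] at h0
      linarith
    have b3 : (∫ t in (1/2:ℝ)..(3/4:ℝ), (ρ (τ (u k) - τ t) * w t - ρ (τ 0 - τ t) * w t))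
        ≤ m * ∫ t in (1/2:ℝ)..(3/4:ℝ), (ρ (τ (u k) - τ t) - ρ (τ 0 - τ t)) := by
      rw [← intervalIntegral.integral_const_mul]
      apply intervalIntegral.integral_mono_on (by norm_num : (1/2:ℝ) ≤ 3/4)
        (iiD k (1/2) (3/4) (by norm_num) (by norm_num) (by norm_num))
      · apply ContinuousOn.intervalIntegrable
        apply (continuousOn_const.mul ((contρτ (u k)).sub (contρτ 0))).mono
        rw [uIcc_of_le (by norm_num : (1/2:ℝ) ≤ 3/4)]
        exact Icc_subset_Icc (by norm_num) (by norm_num)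
      · intro t ht
        have ht' : t ∈ Icc (u k) (1:ℝ) := ⟨le_trans hukh ht.1, le_trans ht.2 (by norm_num)⟩
        have hD0 := hDle t ht'
        have hmw := hwm t ht
        have := mul_le_mul_of_nonpos_left hmw hD0
        nlinarith [this]
    have hΦJ : m * (∫ t in (1/2:ℝ)..(3/4), (ρ (τ 0 - τ t) - ρ (τ (u k) - τ t)))
        = -(m * ∫ t in (1/2:ℝ)..(3/4:ℝ), (ρ (τ (u k) - τ t) - ρ (τ 0 - τ t))) := by
      have : (∫ t in (1/2:ℝ)..(3/4), (ρ (τ 0 - τ t) - ρ (τ (u k) - τ t)))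
          = - ∫ t in (1/2:ℝ)..(3/4:ℝ), (ρ (τ (u k) - τ t) - ρ (τ 0 - τ t)) := by
        rw [← intervalIntegral.integral_neg]
        simp only [neg_sub]
      rw [this]; ring
    rw [hΦJ]
    rw [← s1, ← s2, ← s3] at step0
    have e5 : u k * (K * h k * M) = K * M * u k * h k := by ring
    set J := ∫ t in (1/2:ℝ)..(3/4:ℝ), (ρ (τ (u k) - τ t) - ρ (τ 0 - τ t)) with hJdef
    linarith [step0, b1, b2, b3, b4, e5]
  -- the limit L and positivity
  have hIoo_sub : Ioo (1/2:ℝ) (3/4) ⊆ Icc (0:ℝ) 1 := fun t ht =>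
    ⟨by linarith [ht.1], by linarith [ht.2]⟩
  have hg_aem : AEMeasurable (fun t => τ 0 - τ t)
      (volume.restrict (Ioo (1/2:ℝ) (3/4))) :=
    ((continuousOn_const.sub hτc).mono hIoo_sub).aemeasurable measurableSet_Ioo
  have hderiv_aesm : AEStronglyMeasurable (fun t => -deriv ρ (τ 0 - τ t))
      (volume.restrict (Ioo (1/2:ℝ) (3/4))) :=
    (AEMeasurable.neg ((measurable_deriv ρ).comp_aemeasurable hg_aem)).aestronglyMeasurable
  have hfin : volume (Ioo (1/2:ℝ) (3/4)) < ⊤ := by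
    rw [Real.volume_Ioo]; exact ENNReal.ofReal_lt_top
  have hint_lim : IntegrableOn (fun t => -deriv ρ (τ 0 - τ t)) (Ioo (1/2:ℝ) (3/4)) := by
    refine Integrable.mono'
      (show IntegrableOn (fun _ : ℝ => K) (Ioo (1/2:ℝ) (3/4)) volume from
        integrableOn_const hfin.ne) hderiv_aesm ?_
    refine Eventually.of_forall fun t => ?_
    simpa [Real.norm_eq_abs, abs_neg] using hK (τ 0 - τ t)
  have hpos_t : ∀ t ∈ Ioo (1/2:ℝ) (3/4), 0 < -deriv ρ (τ 0 - τ t) := by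
    intro t ht
    have ht01 : t ∈ Icc (0:ℝ) 1 := hIoo_sub ht
    have h1 : τ 0 < τ t := hτm mem0 ht01 (by linarith [ht.1])
    have := hρ.deriv_neg (τ 0 - τ t) (by linarith)
    linarith
  have hLpos : 0 < ∫ t in Ioo (1/2:ℝ) (3/4), -deriv ρ (τ 0 - τ t) := by
    rw [setIntegral_pos_iff_support_of_nonneg_ae
      ((ae_restrict_iff' measurableSet_Ioo).2
        (Eventually.of_forall fun t ht => (hpos_t t ht).le)) hint_lim]
    have hsub : Ioo (1/2:ℝ) (3/4) ⊆
        Function.support (fun t => -deriv ρ (τ 0 - τ t)) ∩ Ioo (1/2:ℝ) (3/4) :=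
      fun t ht => ⟨(hpos_t t ht).ne', ht⟩
    calc (0:ℝ≥0∞) < volume (Ioo (1/2:ℝ) (3/4)) := by
          rw [Real.volume_Ioo]; norm_num
      _ ≤ _ := measure_mono hsub
  -- dominated convergence
  have hDCT : Tendsto
      (fun k => ∫ t in Ioo (1/2:ℝ) (3/4), (ρ (τ 0 - τ t) - ρ (τ (u k) - τ t)) / h k)
      atTop (𝓝 (∫ t in Ioo (1/2:ℝ) (3/4), -deriv ρ (τ 0 - τ t))) := by
    apply tendsto_integral_of_dominated_convergence (fun _ => K)
    · intro k
      apply ContinuousOn.aestronglyMeasurable _ measurableSet_Ioo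
      exact (((contρτ 0).sub (contρτ (u k))).div_const _).mono hIoo_sub
    · exact (show IntegrableOn (fun _ : ℝ => K) (Ioo (1/2:ℝ) (3/4)) volume from
        integrableOn_const hfin.ne)
    · intro k
      refine Eventually.of_forall fun t => ?_
      rw [Real.norm_eq_abs, abs_div, abs_of_pos (hh_pos k), div_le_iff₀ (hh_pos k)]
      calc |ρ (τ 0 - τ t) - ρ (τ (u k) - τ t)|
          ≤ K * |(τ 0 - τ t) - (τ (u k) - τ t)| := lip _ _
        _ = K * h k := by
            have e2 : (τ 0 - τ t) - (τ (u k) - τ t) = -(h k) := by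
              simp only [hh_def]; ring
            rw [e2, abs_neg, abs_of_pos (hh_pos k)]
    · refine Eventually.of_forall fun t => ?_
      have hd : HasDerivAt ρ (deriv ρ (τ 0 - τ t)) (τ 0 - τ t) :=
        (hρ.diff (τ 0 - τ t)).hasDerivAt
      have hslope := hasDerivAt_iff_tendsto_slope.1 hd
      have hseq : Tendsto (fun k => (τ 0 - τ t) + h k) atTop (𝓝[≠] (τ 0 - τ t)) := by
        rw [tendsto_nhdsWithin_iff]
        constructor
        · simpa using tendsto_const_nhds.add hh_tendsto
        · exact Eventually.of_forall fun k => by simp [(hh_pos k).ne']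
      have hcomp := (hslope.comp hseq).neg
      refine Tendsto.congr (fun k => ?_) hcomp
      show -(slope ρ (τ 0 - τ t) ((τ 0 - τ t) + h k)) = _
      rw [slope_def_field]
      have e3 : τ (u k) - τ t = (τ 0 - τ t) + h k := by simp only [hh_def]; ring
      rw [← e3]
      have e4 : τ (u k) - τ t - (τ 0 - τ t) = h k := by simp only [hh_def]; ring
      rw [e4]
      ring
  -- combine
  have hbound : ∀ k,
      (∫ t in Ioo (1/2:ℝ) (3/4), (ρ (τ 0 - τ t) - ρ (τ (u k) - τ t)) / h k)
      ≤ K * M / m * u k := by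
    intro k
    have hkey := key k
    have e1 : (∫ t in (1/2:ℝ)..(3/4), (ρ (τ 0 - τ t) - ρ (τ (u k) - τ t)) / h k)
        = ∫ t in Ioo (1/2:ℝ) (3/4), (ρ (τ 0 - τ t) - ρ (τ (u k) - τ t)) / h k := by
      rw [intervalIntegral.integral_of_le (by norm_num : (1/2:ℝ) ≤ 3/4),
        integral_Ioc_eq_integral_Ioo]
    rw [← e1, intervalIntegral.integral_div, div_le_iff₀ (hh_pos k)]
    have h2 : (∫ t in (1/2:ℝ)..(3/4), (ρ (τ 0 - τ t) - ρ (τ (u k) - τ t)))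
        ≤ K * M * u k * h k / m := by
      rw [le_div_iff₀ hm]
      nlinarith [hkey]
    have h3 : K * M * u k * h k / m = K * M / m * u k * h k := by ring
    linarith [h2]
  have hc : Tendsto (fun k => K * M / m * u k) atTop (𝓝 0) := by
    have := hu_tendsto.const_mul (K * M / m)
    simpa using this
  have hL_le : (∫ t in Ioo (1/2:ℝ) (3/4), -deriv ρ (τ 0 - τ t)) ≤ 0 :=
    le_of_tendsto_of_tendsto' hDCT hc hbound
  linarith


/-- any minimizer of `G_0` over `[0,1]` is `> 0` and any
minimizer of `G_n` over `[0,1]` is `< 1`. -/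
theorem extreme_weights_interior
    {n : ℕ} (hn : 1 ≤ n)
    (ρ : ℝ → ℝ) (hρ : StrictBowlShaped ρ)
    (K : ℝ) (hK : ∀ z, |deriv ρ z| ≤ K)
    (τ : ℝ → ℝ) (hτc : ContinuousOn τ (Set.Icc 0 1))
    (hτm : StrictMonoOn τ (Set.Icc 0 1)) :
    (∀ u₀ ∈ Set.Icc (0 : ℝ) 1,
      (∀ v ∈ Set.Icc (0 : ℝ) 1, GFun n ρ τ 0 u₀ ≤ GFun n ρ τ 0 v) → 0 < u₀) ∧
    (∀ uₙ ∈ Set.Icc (0 : ℝ) 1,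
      (∀ v ∈ Set.Icc (0 : ℝ) 1, GFun n ρ τ (Fin.last n) uₙ ≤ GFun n ρ τ (Fin.last n) v) →
        uₙ < 1) := by
  have hwcont : ContinuousOn (fun t : ℝ => ((n:ℝ)+1) * (1-t)^n) (Set.Icc 0 1) :=
    continuousOn_const.mul ((continuousOn_const.sub continuousOn_id).pow n)
  have hw0 : ∀ t ∈ Set.Icc (0:ℝ) 1, 0 ≤ ((n:ℝ)+1) * (1-t)^n := by
    intro t ht
    have h1 : (0:ℝ) ≤ 1 - t := by linarith [ht.2]
    positivity
  have hwM : ∀ t ∈ Set.Icc (0:ℝ) 1, ((n:ℝ)+1) * (1-t)^n ≤ (n:ℝ)+1 := by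
    intro t ht
    have h1 : (1-t)^n ≤ 1 := pow_le_one₀ (by linarith [ht.2]) (by linarith [ht.1])
    have h2 : (0:ℝ) ≤ (n:ℝ)+1 := by positivity
    nlinarith [h1, h2]
  have hmpos : (0:ℝ) < ((n:ℝ)+1) * ((4:ℝ)⁻¹)^n := by positivity
  have hwm : ∀ t ∈ Set.Icc (1/2:ℝ) (3/4), ((n:ℝ)+1) * ((4:ℝ)⁻¹)^n ≤ ((n:ℝ)+1) * (1-t)^n := by
    intro t ht
    have h1 : (4:ℝ)⁻¹ ≤ 1 - t := by
      have := ht.2; norm_num at this ⊢; linarith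
    have h2 : ((4:ℝ)⁻¹)^n ≤ (1-t)^n := pow_le_pow_left₀ (by norm_num) h1 n
    have h3 : (0:ℝ) ≤ (n:ℝ)+1 := by positivity
    nlinarith [h2, h3]
  constructor
  · -- minimizer of G₀ is > 0
    intro u₀ hu₀ hminu
    by_contra hle
    push_neg at hle
    have hz : u₀ = 0 := le_antisymm hle hu₀.1
    subst hz
    have e : ∀ s : ℝ, GFun n ρ τ 0 s
        = ∫ t in Set.Ioo (0:ℝ) 1, ρ (τ s - τ t) * (((n:ℝ)+1) * (1-t)^n) := by
      intro s
      unfold GFun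
      refine MeasureTheory.setIntegral_congr_fun measurableSet_Ioo fun t _ => ?_
      unfold betaDen
      simp only [Fin.val_zero, Nat.choose_zero_right, pow_zero, Nat.sub_zero, Nat.cast_one]
      ring
    exact core_lemma ρ hρ K hK τ hτc hτm _ hwcont ((n:ℝ)+1) hw0 hwM
      (((n:ℝ)+1) * ((4:ℝ)⁻¹)^n) hmpos hwm
      (fun v hv => by rw [← e 0, ← e v]; exact hminu v hv)
  · -- minimizer of Gₙ is < 1
    intro uN huN hminu
    by_contra hge
    push_neg at hge
    have hz : uN = 1 := le_antisymm huN.2 hge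
    subst hz
    have hd' : ∀ z : ℝ, deriv (fun z => ρ (-z)) z = -deriv ρ (-z) := fun z => deriv_comp_neg ρ z
    have hbowl' : StrictBowlShaped (fun z => ρ (-z)) := by
      refine ⟨fun z => hρ.nonneg _, hρ.diff.comp differentiable_neg, ?_, ?_, ?_⟩
      · show ρ (-0) = 0
        rw [neg_zero, hρ.zero]
      · intro z hz
        rw [hd']
        have := hρ.deriv_pos (-z) (by linarith)
        linarith
      · intro z hz
        rw [hd']
        have := hρ.deriv_neg (-z) (by linarith)
        linarith
    have hK' : ∀ z : ℝ, |deriv (fun z => ρ (-z)) z| ≤ K := by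
      intro z; rw [hd', abs_neg]; exact hK _
    have hmaps : ∀ t ∈ Set.Icc (0:ℝ) 1, 1 - t ∈ Set.Icc (0:ℝ) 1 := fun t ht =>
      ⟨by linarith [ht.2], by linarith [ht.1]⟩
    have hτc' : ContinuousOn (fun t : ℝ => -τ (1 - t)) (Set.Icc 0 1) :=
      (hτc.comp ((continuous_const.sub continuous_id).continuousOn) hmaps).neg
    have hτm' : StrictMonoOn (fun t : ℝ => -τ (1 - t)) (Set.Icc 0 1) := by
      intro a ha b hb hab
      have := hτm (hmaps b hb) (hmaps a ha) (by linarith)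
      show -τ (1 - a) < -τ (1 - b)
      linarith
    have eflip : ∀ s : ℝ, (∫ t in Set.Ioo (0:ℝ) 1, ρ (τ s - τ (1-t)) * (((n:ℝ)+1) * (1-t)^n))
        = GFun n ρ τ (Fin.last n) s := by
      intro s
      rw [flip_integral _ (fun t => ρ (τ s - τ t) * (((n:ℝ)+1) * t^n)) (fun t => rfl)]
      unfold GFun
      refine (MeasureTheory.setIntegral_congr_fun measurableSet_Ioo fun t _ => ?_).symm
      unfold betaDen
      simp only [Fin.val_last, Nat.choose_self, Nat.sub_self, pow_zero, Nat.cast_one]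
      ring
    have efun : ∀ s : ℝ, (fun t : ℝ => ρ (-(-τ (1-s) - -τ (1-t))) * (((n:ℝ)+1) * (1-t)^n))
        = fun t : ℝ => ρ (τ (1-s) - τ (1-t)) * (((n:ℝ)+1) * (1-t)^n) := by
      intro s; funext t; congr 2; ring
    refine core_lemma (fun z => ρ (-z)) hbowl' K hK' (fun t => -τ (1 - t)) hτc' hτm'
      (fun t => ((n:ℝ)+1) * (1-t)^n) hwcont ((n:ℝ)+1) hw0 hwM
      (((n:ℝ)+1) * ((4:ℝ)⁻¹)^n) hmpos hwm ?_
    intro v hv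
    show (∫ t in Set.Ioo (0:ℝ) 1, ρ (-(-τ (1-(0:ℝ)) - -τ (1-t))) * (((n:ℝ)+1) * (1-t)^n))
      ≤ ∫ t in Set.Ioo (0:ℝ) 1, ρ (-(-τ (1-v) - -τ (1-t))) * (((n:ℝ)+1) * (1-t)^n)
    rw [efun 0, efun v, eflip (1-0), eflip (1-v),
      show (1:ℝ) - 0 = 1 from by norm_num]
    exact hminu (1-v) ⟨by linarith [hv.2], by linarith [hv.1]⟩


end
end

section
/- For every integer n ≥ 0 and every real number c, the function t ↦ |c − t/(1−t)|·(n+1)·t^n is not Lebesgue-integrable on (0,1); that is, ∫₀¹ |c − t/(1−t)|·(n+1)·t^n dt = +∞. Consequently, under the integrated absolute-error loss for estimating the odds ratio F/(1−F), every invariant estimator has infinite risk. -/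
open MeasureTheory Set
open scoped ENNReal NNReal

noncomputable section

/-- Risk (in `[0,∞]`) of an estimator `d` of `F` under the loss
`∫ |τ(d(t)) − τ(F(t))| dF(t)` with `τ(z) = z/(1−z)` (odds ratio). -/
def riskAbsOdds {n : ℕ} (μ : Measure ℝ) (d : (Fin n → ℝ) → ℝ → ℝ) : ℝ≥0∞ :=
  ∫⁻ x, (∫⁻ t, ENNReal.ofReal
      |d x t / (1 - d x t) - cdfOf μ t / (1 - cdfOf μ t)| ∂μ)
    ∂(sampleMeasure n μ)

/-- If a function is bounded below by `ε ≠ 0` on each of infinitely many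
disjoint blocks `Ioc (t k) (t (k+1))`, its lintegral is infinite. -/
lemma aux_blocks (ν : Measure ℝ) (f : ℝ → ℝ≥0∞) (t : ℕ → ℝ)
    (hlt : ∀ k, t k < t (k + 1)) (ε : ℝ≥0∞) (hε : ε ≠ 0)
    (hlow : ∀ k, ε ≤ ∫⁻ x in Set.Ioc (t k) (t (k + 1)), f x ∂ν) :
    ∫⁻ x, f x ∂ν = ⊤ := by
  have hmono : StrictMono t := strictMono_nat_of_lt_succ hlt
  have hdisj : Pairwise (Function.onFun Disjoint fun k => Set.Ioc (t k) (t (k + 1))) := by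
    intro i j hij
    rcases hij.lt_or_gt with h | h
    · exact Set.Ioc_disjoint_Ioc.2
        (le_trans inf_le_left (le_trans (hmono.monotone h) le_sup_right))
    · exact Set.Ioc_disjoint_Ioc.2
        (le_trans inf_le_right (le_trans (hmono.monotone h) le_sup_left))
  have h1 : ∑' k : ℕ, ∫⁻ x in Set.Ioc (t k) (t (k + 1)), f x ∂ν ≤ ∫⁻ x, f x ∂ν := by
    rw [← lintegral_iUnion (fun k => measurableSet_Ioc) hdisj]
    exact setLIntegral_le_lintegral _ _
  have h2 : (⊤ : ℝ≥0∞) ≤ ∑' k : ℕ, ∫⁻ x in Set.Ioc (t k) (t (k + 1)), f x ∂ν := by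
    calc (⊤ : ℝ≥0∞) = ∑' _ : ℕ, ε := (ENNReal.tsum_const_eq_top_of_ne_zero hε).symm
      _ ≤ _ := ENNReal.tsum_le_tsum hlow
  exact top_le_iff.mp (h2.trans h1)

lemma aux_setbound (ν : Measure ℝ) (f : ℝ → ℝ≥0∞) (s : Set ℝ) (hs : MeasurableSet s)
    (a : ℝ≥0∞) (h : ∀ x ∈ s, a ≤ f x) : a * ν s ≤ ∫⁻ x in s, f x ∂ν := by
  rw [← setLIntegral_const s a]
  exact setLIntegral_mono' hs h

/-- `∫₀¹ |c − t/(1−t)|·(n+1)·t^n dt = +∞` for every `n ≥ 0` and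
every real `c`; consequently, under the integrated absolute-error loss for the
odds ratio `F/(1−F)`, every invariant estimator has infinite risk. -/
theorem odds_ratio_infinite_risk :
    (∀ (n : ℕ) (c : ℝ),
      ∫⁻ t in Set.Ioo (0 : ℝ) 1,
        ENNReal.ofReal (|c - t / (1 - t)| * (((n : ℝ) + 1) * t ^ n)) = ⊤) ∧
    (∀ (n : ℕ), 1 ≤ n →
      ∀ (μ : Measure ℝ), IsProbabilityMeasure μ → Continuous (cdfOf μ) →
        ∀ u : Fin (n + 1) → ℝ, (∀ i, u i ∈ Set.Icc (0 : ℝ) 1) →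
          riskAbsOdds μ (invEst u) = ⊤) := by
  constructor
  · -- part 1
    intro n c
    obtain ⟨K0, hK0⟩ : ∃ K0 : ℕ, 1 + |c| < (2 : ℝ) ^ K0 :=
      pow_unbounded_of_one_lt _ one_lt_two
    set T : ℕ → ℝ := fun k => 1 - ((2 : ℝ) ^ (k + K0 + 1))⁻¹ with hT
    have hqpos : ∀ k : ℕ, (0 : ℝ) < (2 : ℝ) ^ (k + K0 + 1) := fun k => by positivity
    have hqbig : ∀ k : ℕ, (2 : ℝ) ^ K0 * 2 ≤ (2 : ℝ) ^ (k + K0 + 1) := by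
      intro k
      have : (2 : ℝ) ^ (K0 + 1) ≤ (2 : ℝ) ^ (k + K0 + 1) :=
        pow_le_pow_right₀ one_le_two (by omega)
      rw [pow_succ] at this
      linarith
    have hlt : ∀ k, T k < T (k + 1) := by
      intro k
      have h1 : ((2 : ℝ) ^ (k + 1 + K0 + 1))⁻¹ < ((2 : ℝ) ^ (k + K0 + 1))⁻¹ := by
        apply inv_strictAnti₀ (hqpos k)
        exact pow_lt_pow_right₀ one_lt_two (by omega)
      simp only [hT]
      linarith
    apply aux_blocks _ _ T hlt (ENNReal.ofReal ((1 / 2) ^ n * (1 / 4)))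
      (by positivity)
    intro k
    set q : ℝ := (2 : ℝ) ^ (k + K0 + 1) with hq
    have hq0 : (0 : ℝ) < q := hqpos k
    have hq2 : (2 : ℝ) * (1 + |c|) ≤ q := by
      have := hqbig k
      nlinarith [abs_nonneg c]
    have hsub : Set.Ioc (T k) (T (k + 1)) ⊆ Set.Ioo (0 : ℝ) 1 := by
      intro x hx
      have h1 : T k < x := hx.1
      have h2 : x ≤ T (k + 1) := hx.2
      have hq1 : (1 : ℝ) ≤ q := one_le_pow₀ one_le_two
      have hi : q⁻¹ ≤ 1 := inv_le_one_of_one_le₀ hq1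
      have hi2 : (0 : ℝ) < ((2 : ℝ) ^ (k + 1 + K0 + 1))⁻¹ := by positivity
      constructor
      · simp only [hT] at h1
        nlinarith [abs_nonneg c]
      · simp only [hT] at h2
        linarith
    -- lower bound on the integrand on the block
    have hbound : ∀ x ∈ Set.Ioc (T k) (T (k + 1)),
        ENNReal.ofReal (q / 2 * (1 / 2) ^ n) ≤
          ENNReal.ofReal (|c - x / (1 - x)| * (((n : ℝ) + 1) * x ^ n)) := by
      intro x hx
      apply ENNReal.ofReal_le_ofReal
      have hx1 : 1 - q⁻¹ < x := hx.1
      have hx2 : x ≤ T (k + 1) := hx.2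
      have hxlt1 : x < 1 := (hsub hx).2
      have hx0 : (0 : ℝ) < x := (hsub hx).1
      have h1x : 0 < 1 - x := by linarith
      have h1xq : 1 - x < q⁻¹ := by linarith
      have hiq : (0 : ℝ) < q⁻¹ := by positivity
      -- x/(1-x) ≥ (1-q⁻¹)/q⁻¹ = q - 1
      have hdiv : q - 1 ≤ x / (1 - x) := by
        rw [le_div_iff₀ h1x]
        have hxge : 1 - q⁻¹ ≤ x := le_of_lt hx1
        have hq1 : (1 : ℝ) ≤ q := one_le_pow₀ one_le_two
        have key : (q - 1) * (1 - x) ≤ (q - 1) * q⁻¹ := by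
          apply mul_le_mul_of_nonneg_left (le_of_lt h1xq) (by linarith)
        have : (q - 1) * q⁻¹ = 1 - q⁻¹ := by
          field_simp
        linarith
      have habs : x / (1 - x) - |c| ≤ |c - x / (1 - x)| := by
        rw [abs_sub_comm]
        linarith [le_abs_self (x / (1 - x) - c), le_abs_self c]
      have hA : q / 2 ≤ |c - x / (1 - x)| := by
        have : q / 2 ≤ q - 1 - |c| := by linarith
        linarith
      have hxhalf : (1 / 2 : ℝ) ≤ x := by
        have hq1 : (2 : ℝ) ≤ q := by nlinarith [abs_nonneg c]
        have : q⁻¹ ≤ 1 / 2 := by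
          rw [inv_le_iff_one_le_mul₀ hq0] at *
          · linarith
        linarith
      have hpow : (1 / 2 : ℝ) ^ n ≤ x ^ n :=
        pow_le_pow_left₀ (by norm_num) hxhalf n
      have hn1 : (1 : ℝ) ≤ (n : ℝ) + 1 := by
        have := Nat.cast_nonneg (α := ℝ) n
        linarith
      have hB : (1 / 2 : ℝ) ^ n ≤ ((n : ℝ) + 1) * x ^ n := by
        nlinarith [pow_nonneg (le_of_lt hx0) n]
      have hq2' : (0 : ℝ) ≤ q / 2 := by positivity
      calc q / 2 * (1 / 2) ^ n ≤ q / 2 * (((n : ℝ) + 1) * x ^ n) := by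
            apply mul_le_mul_of_nonneg_left hB hq2'
        _ ≤ |c - x / (1 - x)| * (((n : ℝ) + 1) * x ^ n) := by
            apply mul_le_mul_of_nonneg_right hA
            nlinarith [pow_nonneg (le_of_lt hx0) n]
    -- measure of the block
    have hmeas : (volume.restrict (Set.Ioo (0:ℝ) 1)) (Set.Ioc (T k) (T (k + 1)))
        = ENNReal.ofReal (q⁻¹ / 2) := by
      rw [Measure.restrict_apply measurableSet_Ioc,
        Set.inter_eq_left.mpr hsub, Real.volume_Ioc]
      congr 1
      simp only [hT, hq]
      have : ((2 : ℝ) ^ (k + 1 + K0 + 1)) = 2 ^ (k + K0 + 1) * 2 := by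
        rw [← pow_succ]
        congr 1
        omega
      rw [this]
      rw [mul_inv]
      ring_nf
    calc ENNReal.ofReal ((1 / 2) ^ n * (1 / 4))
        = ENNReal.ofReal (q / 2 * (1 / 2) ^ n) * ENNReal.ofReal (q⁻¹ / 2) := by
          rw [← ENNReal.ofReal_mul (by positivity)]
          congr 1
          field_simp
          ring
      _ = ENNReal.ofReal (q / 2 * (1 / 2) ^ n) *
            (volume.restrict (Set.Ioo (0:ℝ) 1)) (Set.Ioc (T k) (T (k + 1))) := by
          rw [hmeas]
      _ ≤ ∫⁻ x in Set.Ioc (T k) (T (k + 1)),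
            ENNReal.ofReal (|c - x / (1 - x)| * (((n : ℝ) + 1) * x ^ n))
            ∂(volume.restrict (Set.Ioo (0:ℝ) 1)) :=
          aux_setbound _ _ _ measurableSet_Ioc _ hbound
  · -- part 2
    intro n _hn μ hprob hcont u hu
    set F : ℝ → ℝ := cdfOf μ with hF
    have hFeq : F = ProbabilityTheory.cdf μ := by
      funext x
      rw [ProbabilityTheory.cdf_eq_real]
      rfl
    have hFmono : Monotone F := by
      rw [hFeq]
      exact (ProbabilityTheory.cdf μ).mono
    -- surjectivity onto (0,1)
    have hsurj : ∀ a : ℝ, 0 < a → a < 1 → ∃ s, F s = a := by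
      intro a ha0 ha1
      have h1 : ∀ᶠ x in Filter.atBot, F x < a := by
        rw [hFeq]
        exact (ProbabilityTheory.tendsto_cdf_atBot μ).eventually_lt_const ha0
      have h2 : ∀ᶠ x in Filter.atTop, a < F x := by
        rw [hFeq]
        exact (ProbabilityTheory.tendsto_cdf_atTop μ).eventually_const_lt ha1
      obtain ⟨s1, hs1⟩ := h1.exists
      obtain ⟨s2, hs2⟩ := h2.exists
      have := intermediate_value_univ s1 s2 hcont
      have ha : a ∈ Set.Icc (F s1) (F s2) := ⟨le_of_lt hs1, le_of_lt hs2⟩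
      obtain ⟨s, hs⟩ := this ha
      exact ⟨s, hs⟩
    -- bound on the estimator's odds values
    set C : ℝ := ∑ i : Fin (n + 1), |u i / (1 - u i)| with hC
    have hCnn : 0 ≤ C := by
      rw [hC]
      positivity
    have hvC : ∀ i, |u i / (1 - u i)| ≤ C := by
      intro i
      exact Finset.single_le_sum (f := fun j => |u j / (1 - u j)|)
        (fun j _ => abs_nonneg _) (Finset.mem_univ i)
    obtain ⟨K0, hK0⟩ : ∃ K0 : ℕ, 1 + C < (2 : ℝ) ^ K0 :=
      pow_unbounded_of_one_lt _ one_lt_two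
    -- pick points where F equals the dyadic levels
    have hexists : ∀ k : ℕ, ∃ s, F s = 1 - ((2 : ℝ) ^ (k + K0 + 1))⁻¹ := by
      intro k
      have hq0 : (0 : ℝ) < (2 : ℝ) ^ (k + K0 + 1) := by positivity
      have hq1 : (1 : ℝ) < (2 : ℝ) ^ (k + K0 + 1) :=
        one_lt_pow₀ one_lt_two (by omega)
      apply hsurj
      · have : ((2 : ℝ) ^ (k + K0 + 1))⁻¹ < 1 := inv_lt_one_of_one_lt₀ hq1
        linarith
      · have : (0 : ℝ) < ((2 : ℝ) ^ (k + K0 + 1))⁻¹ := by positivity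
        linarith
    choose T hT using hexists
    have hlt : ∀ k, T k < T (k + 1) := by
      intro k
      by_contra h
      push_neg at h
      have h1 := hFmono h
      rw [hT, hT] at h1
      have : ((2 : ℝ) ^ (k + 1 + K0 + 1))⁻¹ < ((2 : ℝ) ^ (k + K0 + 1))⁻¹ := by
        apply inv_strictAnti₀ (by positivity)
        exact pow_lt_pow_right₀ one_lt_two (by omega)
      linarith
    -- the inner integral is infinite for every sample x
    have hinner : ∀ x : Fin n → ℝ,
        (∫⁻ t, ENNReal.ofReal
          |invEst u x t / (1 - invEst u x t) - F t / (1 - F t)| ∂μ) = ⊤ := by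
      intro x
      apply aux_blocks _ _ T hlt (ENNReal.ofReal (1 / 4)) (by positivity)
      intro k
      set q : ℝ := (2 : ℝ) ^ (k + K0 + 1) with hq
      have hq0 : (0 : ℝ) < q := by positivity
      have hqbig : (2 : ℝ) ^ K0 * 2 ≤ q := by
        have : (2 : ℝ) ^ (K0 + 1) ≤ (2 : ℝ) ^ (k + K0 + 1) :=
          pow_le_pow_right₀ one_le_two (by omega)
        rw [pow_succ] at this
        exact this
      have hq2 : (2 : ℝ) * (1 + C) ≤ q := by nlinarith
      have hq1 : (1 : ℝ) ≤ q := one_le_pow₀ one_le_two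
      -- F values on the block
      have hFk : F (T k) = 1 - q⁻¹ := hT k
      have hFk1 : F (T (k + 1)) = 1 - q⁻¹ / 2 := by
        rw [hT]
        congr 1
        have : ((2 : ℝ) ^ (k + 1 + K0 + 1)) = q * 2 := by
          rw [hq, ← pow_succ]
          congr 1
          omega
        rw [this, mul_inv]
        ring
      have hbound : ∀ t ∈ Set.Ioc (T k) (T (k + 1)),
          ENNReal.ofReal (q / 2) ≤ ENNReal.ofReal
            |invEst u x t / (1 - invEst u x t) - F t / (1 - F t)| := by
        intro t ht
        apply ENNReal.ofReal_le_ofReal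
        have hFt1 : 1 - q⁻¹ ≤ F t := by
          rw [← hFk]; exact hFmono (le_of_lt ht.1)
        have hFt2 : F t ≤ 1 - q⁻¹ / 2 := by
          rw [← hFk1]; exact hFmono ht.2
        have hiq : (0 : ℝ) < q⁻¹ := by positivity
        have h1F : 0 < 1 - F t := by linarith
        have h1Fq : 1 - F t ≤ q⁻¹ := by linarith
        have hFnn : 0 ≤ F t := by
          have hiq1 : q⁻¹ ≤ 1 := inv_le_one_of_one_le₀ hq1
          linarith
        have hdiv : q - 1 ≤ F t / (1 - F t) := by
          rw [le_div_iff₀ h1F]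
          have key : (q - 1) * (1 - F t) ≤ (q - 1) * q⁻¹ :=
            mul_le_mul_of_nonneg_left h1Fq (by linarith)
          have : (q - 1) * q⁻¹ = 1 - q⁻¹ := by field_simp
          linarith
        set v : ℝ := invEst u x t / (1 - invEst u x t) with hv
        have hvC' : |v| ≤ C := hvC _
        have habs : F t / (1 - F t) - |v| ≤ |v - F t / (1 - F t)| := by
          rw [abs_sub_comm]
          linarith [le_abs_self (F t / (1 - F t) - v), le_abs_self v]
        have : q / 2 ≤ q - 1 - C := by linarith
        linarith
      -- measure of the block
      have hmeas : μ (Set.Ioc (T k) (T (k + 1))) = ENNReal.ofReal (q⁻¹ / 2) := by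
        have hsub : Set.Iic (T k) ⊆ Set.Iic (T (k + 1)) :=
          Set.Iic_subset_Iic.2 (le_of_lt (hlt k))
        have hdiff : Set.Iic (T (k + 1)) \ Set.Iic (T k) = Set.Ioc (T k) (T (k + 1)) :=
          Set.ext fun y => by simp [not_le, and_comm]
        have h1 : μ (Set.Ioc (T k) (T (k + 1))) =
            μ (Set.Iic (T (k + 1))) - μ (Set.Iic (T k)) := by
          rw [← hdiff]
          exact measure_diff hsub measurableSet_Iic.nullMeasurableSet (measure_ne_top μ _)
        have h2 : (μ (Set.Ioc (T k) (T (k + 1)))).toReal = q⁻¹ / 2 := by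
          rw [h1, ENNReal.toReal_sub_of_le (measure_mono hsub) (measure_ne_top μ _)]
          have e1 : (μ (Set.Iic (T (k + 1)))).toReal = F (T (k + 1)) := rfl
          have e2 : (μ (Set.Iic (T k))).toReal = F (T k) := rfl
          rw [e1, e2, hFk, hFk1]
          ring
        rw [← ENNReal.ofReal_toReal (measure_ne_top μ _), h2]
      calc ENNReal.ofReal (1 / 4)
          = ENNReal.ofReal (q / 2) * ENNReal.ofReal (q⁻¹ / 2) := by
            rw [← ENNReal.ofReal_mul (by positivity)]
            congr 1
            field_simp
            ring
        _ = ENNReal.ofReal (q / 2) * μ (Set.Ioc (T k) (T (k + 1))) := by rw [hmeas]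
        _ ≤ _ := aux_setbound _ _ _ measurableSet_Ioc _ hbound
    -- conclude
    have hps : IsProbabilityMeasure (sampleMeasure n μ) := by
      unfold sampleMeasure
      infer_instance
    unfold riskAbsOdds
    rw [lintegral_congr hinner, lintegral_const]
    simp [hps.measure_univ]

end
end

section
/- Let n ≥ 2 and 1 ≤ i ≤ n−1, and let f_{T_i}(t) = (n+1)·C(n,i)·t^i·(1−t)^{n−i} be the Beta(i+1, n−i+1) density on (0,1). Then t ↦ t/(1−t) is integrable with respect to f_{T_i}(t) dt on (0,1), and the function u ↦ ∫₀¹ |u/(1−u) − t/(1−t)|·f_{T_i}(t) dt on (0,1) attains its minimum uniquely at the median m_i of the Beta(i+1, n−i+1) distribution, i.e., at the unique m_i ∈ (0,1) with ∫₀^{m_i} f_{T_i}(t) dt = 1/2. -/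
open MeasureTheory Set
open scoped ENNReal NNReal

noncomputable section

/-! ### Auxiliary lemmas -/


/-- CDF of the `Beta(i+1, n-i+1)` distribution, as an explicit polynomial. -/
def betaCDF (n i : ℕ) (x : ℝ) : ℝ :=
  ∑ j ∈ Finset.Ioc i (n + 1), ((n + 1).choose j : ℝ) * x ^ j * (1 - x) ^ (n + 1 - j)

lemma hasDerivAt_term (C : ℝ) (j k : ℕ) (x : ℝ) :
    HasDerivAt (fun x : ℝ => C * x ^ j * (1 - x) ^ k)
      (C * (j * x ^ (j - 1)) * (1 - x) ^ k
        + C * x ^ j * (k * (1 - x) ^ (k - 1) * (-1))) x := by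
  have h1 : HasDerivAt (fun x : ℝ => C * x ^ j) (C * (j * x ^ (j - 1))) x :=
    (hasDerivAt_pow j x).const_mul C
  have h2 : HasDerivAt (fun x : ℝ => (1 - x) ^ k) ((k : ℝ) * (1 - x) ^ (k - 1) * (-1)) x := by
    have : HasDerivAt (fun x : ℝ => 1 - x) (-1) x := (hasDerivAt_id x).const_sub 1
    simpa using this.fun_pow k
  simpa [mul_comm, mul_assoc, mul_left_comm] using h1.fun_mul h2

lemma hasDerivAt_betaCDF {n i : ℕ} (hi : i ≤ n) (x : ℝ) :
    HasDerivAt (betaCDF n i) (betaDen n i x) x := by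
  obtain ⟨k, hk⟩ : ∃ k, i + k = n := ⟨n - i, by omega⟩
  clear hi
  induction k generalizing i with
  | zero =>
    have hin : i = n := by omega
    subst hin
    have hset : Finset.Ioc i (i + 1) = {i + 1} := by
      ext j; simp [Finset.mem_Ioc]; all_goals omega
    have : betaCDF i i = fun x : ℝ => ((i + 1).choose (i + 1) : ℝ) * x ^ (i + 1) * (1 - x) ^ (i + 1 - (i + 1)) := by
      funext x; simp [betaCDF, hset]
    rw [this]
    have h := hasDerivAt_term ((i + 1).choose (i + 1) : ℝ) (i + 1) (i + 1 - (i + 1)) x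
    convert h using 1
    simp [betaDen, Nat.choose_self]
  | succ k ih =>
    have hk' : (i + 1) + k = n := by omega
    have hlt : i < n := by omega
    have hset : Finset.Ioc i (n + 1) = insert (i + 1) (Finset.Ioc (i + 1) (n + 1)) := by
      ext j; simp [Finset.mem_Ioc]; all_goals omega
    have hnot : i + 1 ∉ Finset.Ioc (i + 1) (n + 1) := by simp
    have hsplit : betaCDF n i = fun x : ℝ =>
        ((n + 1).choose (i + 1) : ℝ) * x ^ (i + 1) * (1 - x) ^ (n + 1 - (i + 1)) + betaCDF n (i + 1) x := by
      funext x; simp [betaCDF, hset, Finset.sum_insert hnot]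
    rw [hsplit]
    have h := (hasDerivAt_term ((n + 1).choose (i + 1) : ℝ) (i + 1) (n + 1 - (i + 1)) x).fun_add (ih hk')
    refine h.congr_deriv (Eq.symm ?_)
    obtain ⟨a, ha⟩ : ∃ a, n - i = a + 1 := ⟨n - i - 1, by omega⟩
    have h1 : n + 1 - (i + 1) = a + 1 := by omega
    have h2 : n - (i + 1) = a := by omega
    have h3 : n + 1 - (i + 1) - 1 = a := by omega
    have e1 : (((n + 1).choose (i + 1) : ℝ)) * ((i : ℝ) + 1) = ((n : ℝ) + 1) * (n.choose i : ℝ) := by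
      have := Nat.add_one_mul_choose_eq n i
      exact_mod_cast by exact_mod_cast congrArg (Nat.cast : ℕ → ℝ) this.symm
    have e2 : (((n + 1).choose (i + 1) : ℝ)) * ((a : ℝ) + 1) = ((n : ℝ) + 1) * (n.choose (i + 1) : ℝ) := by
      have hA := Nat.choose_succ_right_eq (n + 1) (i + 1)
      have hB := Nat.add_one_mul_choose_eq n (i + 1)
      rw [h1] at hA
      have : (n + 1).choose (i + 1) * (a + 1) = (n + 1) * n.choose (i + 1) := by omega
      exact_mod_cast congrArg (Nat.cast : ℕ → ℝ) this
    simp only [betaDen, ha, h1, h2, h3]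
    push_cast
    linear_combination (-(x ^ i * (1 - x) ^ (a + 1))) * e1 + (x ^ (i + 1) * (1 - x) ^ a) * e2

lemma betaCDF_zero (n i : ℕ) : betaCDF n i 0 = 0 := by
  apply Finset.sum_eq_zero
  intro j hj
  simp only [Finset.mem_Ioc] at hj
  have : j ≠ 0 := by omega
  simp [zero_pow this]

lemma betaCDF_one {n i : ℕ} (hi : i ≤ n) : betaCDF n i 1 = 1 := by
  rw [betaCDF, Finset.sum_eq_single (n + 1)]
  · simp
  · intro j hj hne
    simp only [Finset.mem_Ioc] at hj
    have : n + 1 - j ≠ 0 := by omega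
    simp [zero_pow this]
  · intro h
    exact absurd (Finset.mem_Ioc.mpr ⟨by omega, le_refl _⟩) h

lemma continuous_betaDen (n i : ℕ) : Continuous (betaDen n i) := by
  unfold betaDen; fun_prop

lemma betaDen_pos {n i : ℕ} (hi : i ≤ n) {t : ℝ} (ht : t ∈ Set.Ioo (0:ℝ) 1) :
    0 < betaDen n i t := by
  obtain ⟨h0, h1⟩ := ht
  have hc : (0:ℝ) < (n.choose i : ℝ) := by exact_mod_cast Nat.choose_pos hi
  have hn1 : (0:ℝ) < (n:ℝ) + 1 := by positivity
  have h2 : (0:ℝ) < 1 - t := by linarith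
  unfold betaDen
  positivity

lemma integrableOn_betaDen (n i : ℕ) (s : Set ℝ) (hs : s ⊆ Set.Icc 0 1) :
    IntegrableOn (betaDen n i) s volume :=
  (((continuous_betaDen n i).continuousOn).integrableOn_Icc).mono_set hs

lemma integral_betaDen_Ioo {n i : ℕ} (hi : i ≤ n) {a b : ℝ} (hab : a ≤ b) :
    (∫ t in Set.Ioo a b, betaDen n i t) = betaCDF n i b - betaCDF n i a := by
  have h := intervalIntegral.integral_eq_sub_of_hasDerivAt
    (fun t _ => hasDerivAt_betaCDF hi t)
    ((continuous_betaDen n i).intervalIntegrable a b)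
  rw [← h, intervalIntegral.integral_of_le hab, integral_Ioc_eq_integral_Ioo]

lemma betaCDF_strictMonoOn {n i : ℕ} (hi : i ≤ n) :
    StrictMonoOn (betaCDF n i) (Set.Icc 0 1) := by
  apply strictMonoOn_of_deriv_pos (convex_Icc 0 1)
  · exact fun x _ => ((hasDerivAt_betaCDF hi x).continuousAt).continuousWithinAt
  · intro x hx
    rw [interior_Icc] at hx
    rw [(hasDerivAt_betaCDF hi x).deriv]
    exact betaDen_pos hi hx

lemma exists_unique_median {n i : ℕ} (hi : i ≤ n) :
    ∃! m : ℝ, m ∈ Set.Ioo (0 : ℝ) 1 ∧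
      (∫ t in Set.Ioo (0 : ℝ) m, betaDen n i t) = 1 / 2 := by
  have hcont : ContinuousOn (betaCDF n i) (Set.Icc 0 1) :=
    fun x _ => ((hasDerivAt_betaCDF hi x).continuousAt).continuousWithinAt
  have hIV := intermediate_value_Ioo (by norm_num : (0:ℝ) ≤ 1) hcont
  have hmem : (1/2 : ℝ) ∈ Set.Ioo (betaCDF n i 0) (betaCDF n i 1) := by
    rw [betaCDF_zero, betaCDF_one hi]; norm_num
  obtain ⟨m, hm, hfm⟩ := hIV hmem
  have key : ∀ x ∈ Set.Ioo (0:ℝ) 1, (∫ t in Set.Ioo (0 : ℝ) x, betaDen n i t) = betaCDF n i x := by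
    intro x hx
    rw [integral_betaDen_Ioo hi (le_of_lt hx.1), betaCDF_zero, sub_zero]
  refine ⟨m, ⟨hm, by rw [key m hm, hfm]⟩, ?_⟩
  rintro m' ⟨hm', hint'⟩
  rw [key m' hm'] at hint'
  exact (betaCDF_strictMonoOn hi).injOn (Set.mem_Icc_of_Ioo hm') (Set.mem_Icc_of_Ioo hm)
    (by rw [hint', hfm])

lemma betaDen_eq_on_Ioo {n i : ℕ} (hni : 1 ≤ n - i) {t : ℝ} (ht : t ∈ Set.Ioo (0:ℝ) 1) :
    betaDen n i t = (1 - t) * (((n : ℝ) + 1) * (n.choose i) * t ^ i * (1 - t) ^ (n - i - 1)) := by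
  obtain ⟨h, hh⟩ : ∃ h, n - i = h + 1 := ⟨n - i - 1, by omega⟩
  rw [betaDen, hh]
  simp only [Nat.add_sub_cancel, pow_succ]
  ring

lemma integrableOn_tau_mul {n i : ℕ} (hni : 1 ≤ n - i) :
    IntegrableOn (fun t : ℝ => t / (1 - t) * betaDen n i t) (Set.Ioo 0 1) volume := by
  have hg : Continuous (fun t : ℝ =>
      t * (((n : ℝ) + 1) * (n.choose i) * t ^ i * (1 - t) ^ (n - i - 1))) := by fun_prop
  apply IntegrableOn.congr_fun
    ((hg.continuousOn.integrableOn_Icc (a := 0) (b := 1)).mono_set Set.Ioo_subset_Icc_self)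
  · intro t ht
    symm
    beta_reduce
    rw [betaDen_eq_on_Ioo hni ht]
    have h1 : (1:ℝ) - t ≠ 0 := by have := ht.2; intro h; simp only [sub_eq_zero] at h; linarith
    field_simp
  · exact measurableSet_Ioo

lemma integrableOn_abs_tau {n i : ℕ} (hni : 1 ≤ n - i) (c : ℝ) :
    IntegrableOn (fun t : ℝ => |c - t / (1 - t)| * betaDen n i t) (Set.Ioo 0 1) volume := by
  have hg : Continuous (fun t : ℝ =>
      |c * (1 - t) - t| * (((n : ℝ) + 1) * (n.choose i) * t ^ i * (1 - t) ^ (n - i - 1))) := by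
    fun_prop
  apply IntegrableOn.congr_fun
    ((hg.continuousOn.integrableOn_Icc (a := 0) (b := 1)).mono_set Set.Ioo_subset_Icc_self)
  · intro t ht
    symm
    beta_reduce
    have h1 : (0:ℝ) < 1 - t := by have := ht.2; linarith
    have h2 : c - t / (1 - t) = (c * (1 - t) - t) / (1 - t) := by field_simp
    rw [h2, abs_div, abs_of_pos h1, betaDen_eq_on_Ioo hni ht]
    field_simp
  · exact measurableSet_Ioo

lemma tau_lt_tau {a b : ℝ} (ha : a ∈ Set.Ioo (0:ℝ) 1) (hb : b ∈ Set.Ioo (0:ℝ) 1) (hab : a < b) :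
    a / (1 - a) < b / (1 - b) := by
  rw [div_lt_div_iff₀ (by linarith [ha.2]) (by linarith [hb.2])]
  nlinarith [ha.1, hb.1]

lemma median_min {n i : ℕ} (hi : i ≤ n) (hni : 1 ≤ n - i)
    {m : ℝ} (hm : m ∈ Set.Ioo (0:ℝ) 1)
    (hmed : (∫ t in Set.Ioo (0 : ℝ) m, betaDen n i t) = 1 / 2)
    {u : ℝ} (hu : u ∈ Set.Ioo (0:ℝ) 1) (hne : u ≠ m) :
    (∫ t in Set.Ioo (0 : ℝ) 1, |m / (1 - m) - t / (1 - t)| * betaDen n i t) <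
      ∫ t in Set.Ioo (0 : ℝ) 1, |u / (1 - u) - t / (1 - t)| * betaDen n i t := by
  set M := m / (1 - m) with hM
  set B := u / (1 - u) with hB
  set s : ℝ → ℝ := fun t => if t ≤ m then 1 else -1 with hs
  have hsabs : ∀ t, |s t| = 1 := by
    intro t; by_cases h : t ≤ m <;> simp [hs, h]
  have hsmeas : Measurable s := Measurable.ite measurableSet_Iic measurable_const measurable_const
  have hsf_int : IntegrableOn (fun t => s t * betaDen n i t) (Set.Ioo 0 1) volume :=
    (integrableOn_betaDen n i _ Set.Ioo_subset_Icc_self).bdd_mul hsmeas.aestronglyMeasurable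
      (c := 1) (Filter.Eventually.of_forall fun t => by rw [Real.norm_eq_abs, hsabs t])
  have hstf_int : IntegrableOn (fun t => s t * (t / (1 - t) * betaDen n i t)) (Set.Ioo 0 1) volume :=
    (integrableOn_tau_mul hni).bdd_mul hsmeas.aestronglyMeasurable
      (c := 1) (Filter.Eventually.of_forall fun t => by rw [Real.norm_eq_abs, hsabs t])
  have habsB : IntegrableOn (fun t : ℝ => |B - t / (1 - t)| * betaDen n i t) (Set.Ioo 0 1) volume :=
    integrableOn_abs_tau hni B
  have habsM : IntegrableOn (fun t : ℝ => |M - t / (1 - t)| * betaDen n i t) (Set.Ioo 0 1) volume :=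
    integrableOn_abs_tau hni M
  set g : ℝ → ℝ := fun t => (|B - t / (1 - t)| - (B - t / (1 - t)) * s t) * betaDen n i t with hg
  have hg_int : IntegrableOn g (Set.Ioo 0 1) volume := by
    have h1 : IntegrableOn (fun t => |B - t / (1 - t)| * betaDen n i t
        - (B * (s t * betaDen n i t) - s t * (t / (1 - t) * betaDen n i t))) (Set.Ioo 0 1) volume :=
      habsB.sub ((hsf_int.const_mul B).sub hstf_int)
    apply h1.congr_fun ?_ measurableSet_Ioo
    intro t _
    simp only [hg]
    ring
  -- median facts
  have hCDFm : betaCDF n i m = 1/2 := by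
    rw [← hmed, integral_betaDen_Ioo hi (le_of_lt hm.1), betaCDF_zero, sub_zero]
  have hIoom1 : (∫ t in Set.Ioo m 1, betaDen n i t) = 1/2 := by
    rw [integral_betaDen_Ioo hi (le_of_lt hm.2), betaCDF_one hi, hCDFm]; norm_num
  have hIoc0m : (∫ t in Set.Ioc (0:ℝ) m, betaDen n i t) = 1/2 := by
    rw [integral_Ioc_eq_integral_Ioo]; exact hmed
  have hsplitSet : Set.Ioc (0:ℝ) m ∪ Set.Ioo m 1 = Set.Ioo 0 1 :=
    Set.Ioc_union_Ioo_eq_Ioo (le_of_lt hm.1) hm.2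
  have hdisj : Disjoint (Set.Ioc (0:ℝ) m) (Set.Ioo m 1) :=
    (Set.Ioc_disjoint_Ioc_of_le le_rfl).mono_right Set.Ioo_subset_Ioc_self
  have hsf0 : (∫ t in Set.Ioo (0:ℝ) 1, s t * betaDen n i t) = 0 := by
    rw [← hsplitSet, setIntegral_union hdisj measurableSet_Ioo
      (hsf_int.mono_set (by rw [← hsplitSet]; exact Set.subset_union_left))
      (hsf_int.mono_set (by rw [← hsplitSet]; exact Set.subset_union_right))]
    have h1 : (∫ t in Set.Ioc (0:ℝ) m, s t * betaDen n i t) = ∫ t in Set.Ioc (0:ℝ) m, betaDen n i t :=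
      setIntegral_congr_fun measurableSet_Ioc (fun t ht => by simp [hs, ht.2])
    have h2 : (∫ t in Set.Ioo m 1, s t * betaDen n i t) = ∫ t in Set.Ioo m 1, -betaDen n i t :=
      setIntegral_congr_fun measurableSet_Ioo (fun t ht => by
        simp [hs, not_le.mpr ht.1])
    rw [h1, h2, integral_neg, hIoc0m, hIoom1]
    ring
  -- sign identity for the median
  have habsMeq : ∀ t ∈ Set.Ioo (0:ℝ) 1, |M - t / (1 - t)| = (M - t / (1 - t)) * s t := by
    intro t ht
    by_cases h : t ≤ m
    · have hle : t / (1 - t) ≤ M := by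
        rcases eq_or_lt_of_le h with heq | hlt
        · subst heq; exact le_refl _
        · exact le_of_lt (tau_lt_tau ht hm hlt)
      simp only [hs, if_pos h, mul_one]
      exact abs_of_nonneg (by linarith)
    · have hlt : M < t / (1 - t) := tau_lt_tau hm ht (not_le.mp h)
      simp only [hs, if_neg h, mul_neg_one]
      exact abs_of_neg (by linarith)
  -- pointwise decomposition
  have hid : Set.EqOn (fun t : ℝ => |B - t / (1 - t)| * betaDen n i t)
      (fun t : ℝ => g t + (|M - t / (1 - t)| * betaDen n i t + (B - M) * (s t * betaDen n i t)))
      (Set.Ioo 0 1) := by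
    intro t ht
    beta_reduce
    rw [habsMeq t ht]
    simp only [hg]
    ring
  -- positivity of ∫ g
  have hg_pos : 0 < ∫ t in Set.Ioo (0:ℝ) 1, g t := by
    have hnonneg : 0 ≤ᵐ[volume.restrict (Set.Ioo (0:ℝ) 1)] g := by
      refine (ae_restrict_iff' measurableSet_Ioo).2 (Filter.Eventually.of_forall fun t ht => ?_)
      have h1 : (B - t / (1 - t)) * s t ≤ |B - t / (1 - t)| := by
        calc (B - t / (1 - t)) * s t ≤ |(B - t / (1 - t)) * s t| := le_abs_self _
        _ = |B - t / (1 - t)| := by rw [abs_mul, hsabs t, mul_one]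
      exact mul_nonneg (by linarith) (betaDen_pos hi ht).le
    rw [integral_pos_iff_support_of_nonneg_ae hnonneg hg_int]
    set l := min u m with hl
    set r := max u m with hr
    have hlr : l < r := min_lt_max.mpr hne
    have hl0 : (0:ℝ) < l := lt_min hu.1 hm.1
    have hr1 : r < 1 := max_lt hu.2 hm.2
    have hsub01 : Set.Ioo l r ⊆ Set.Ioo (0:ℝ) 1 :=
      fun t ht => ⟨lt_trans hl0 ht.1, lt_trans ht.2 hr1⟩
    have hsub : Set.Ioo l r ⊆ Function.support g := by
      intro t ht
      have ht01 : t ∈ Set.Ioo (0:ℝ) 1 := hsub01 ht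
      have hfpos : 0 < betaDen n i t := betaDen_pos hi ht01
      have habs : (B - t / (1 - t)) * s t < |B - t / (1 - t)| := by
        rcases hne.lt_or_gt with hum | hum
        · -- u < m, so l = u, r = m
          have hlu : l = u := min_eq_left hum.le
          have hrm : r = m := max_eq_right hum.le
          have htm : t ≤ m := by rw [hrm] at ht; exact ht.2.le
          have hBt : B < t / (1 - t) := tau_lt_tau hu ht01 (by rw [hlu] at ht; exact ht.1)
          rw [hs]; simp only [if_pos htm, mul_one]
          exact lt_of_lt_of_le (by linarith) (abs_nonneg _)
        · -- m < u, so l = m, r = u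
          have hlm : l = m := min_eq_right hum.le
          have hru : r = u := max_eq_left hum.le
          have htm : ¬ t ≤ m := by rw [hlm] at ht; exact not_le.mpr ht.1
          have hBt : t / (1 - t) < B := tau_lt_tau ht01 hu (by rw [hru] at ht; exact ht.2)
          rw [hs]; simp only [if_neg htm, mul_neg_one]
          exact lt_of_lt_of_le (by linarith) (abs_nonneg _)
      have : 0 < g t := mul_pos (by linarith) hfpos
      exact ne_of_gt this
    calc (0:ℝ≥0∞) < volume (Set.Ioo l r) := by
          rw [Real.volume_Ioo]; exact ENNReal.ofReal_pos.mpr (by linarith)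
      _ = (volume.restrict (Set.Ioo (0:ℝ) 1)) (Set.Ioo l r) := by
          rw [Measure.restrict_apply measurableSet_Ioo,
            Set.inter_eq_self_of_subset_left hsub01]
      _ ≤ (volume.restrict (Set.Ioo (0:ℝ) 1)) (Function.support g) := measure_mono hsub
  -- assemble
  have hEq : (∫ t in Set.Ioo (0:ℝ) 1, |B - t / (1 - t)| * betaDen n i t)
      = (∫ t in Set.Ioo (0:ℝ) 1, g t)
        + ((∫ t in Set.Ioo (0:ℝ) 1, |M - t / (1 - t)| * betaDen n i t)
          + (B - M) * ∫ t in Set.Ioo (0:ℝ) 1, s t * betaDen n i t) := by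
    have hc_int : IntegrableOn (fun t => (B - M) * (s t * betaDen n i t)) (Set.Ioo 0 1) volume :=
      hsf_int.const_mul (B - M)
    have h2 : IntegrableOn (fun t => |M - t / (1 - t)| * betaDen n i t
        + (B - M) * (s t * betaDen n i t)) (Set.Ioo 0 1) volume := habsM.add hc_int
    rw [setIntegral_congr_fun measurableSet_Ioo hid, integral_add hg_int h2,
      integral_add habsM hc_int, integral_const_mul]
  rw [hsf0, mul_zero, add_zero] at hEq
  rw [hEq]
  linarith [hg_pos]


/-- for `1 ≤ i ≤ n−1`, `t ↦ t/(1−t)` is integrable against the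
`Beta(i+1, n−i+1)` density on `(0,1)`, and
`u ↦ ∫₀¹ |u/(1−u) − t/(1−t)|·f_{T_i}(t) dt` attains its minimum on `(0,1)`
uniquely at the median of the `Beta(i+1, n−i+1)` distribution. -/
theorem odds_ratio_constrained_median
    {n : ℕ} (hn : 2 ≤ n) (i : ℕ) (hi1 : 1 ≤ i) (hi2 : i ≤ n - 1) :
    IntegrableOn (fun t : ℝ => t / (1 - t) * betaDen n i t) (Set.Ioo 0 1) volume ∧
    (∃! m : ℝ, m ∈ Set.Ioo (0 : ℝ) 1 ∧
      (∫ t in Set.Ioo (0 : ℝ) m, betaDen n i t) = 1 / 2) ∧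
    (∀ m : ℝ, m ∈ Set.Ioo (0 : ℝ) 1 →
      (∫ t in Set.Ioo (0 : ℝ) m, betaDen n i t) = 1 / 2 →
      ∀ u ∈ Set.Ioo (0 : ℝ) 1, u ≠ m →
        (∫ t in Set.Ioo (0 : ℝ) 1, |m / (1 - m) - t / (1 - t)| * betaDen n i t) <
          ∫ t in Set.Ioo (0 : ℝ) 1, |u / (1 - u) - t / (1 - t)| * betaDen n i t) := by
  have hi : i ≤ n := by omega
  have hni : 1 ≤ n - i := by omega
  exact ⟨integrableOn_tau_mul hni, exists_unique_median hi,
    fun m hm hmed u hu hne => median_min hi hni hm hmed hu hne⟩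

end
end
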